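/- arXiv:1401.3294 — 11 statements merged into one kernel-verified Lean document; each statement's English description precedes it below -/
import Mathlib

section
/- The additive group of a finite semifield is an elementary abelian p-group for some prime p; that is, every nonzero element of (S,+) has the same prime order p. -/
/-- The additive group of a finite semifield is an elementary abelian `p`-group:
every nonzero element has the same prime order `p`. -/
theorem semifield_additive_elementary_abelian {S : Type*} [Fintype S] [AddCommGroup S]
    (mul : S → S → S) (one : S) (hcard : 1 < Fintype.card S)
    (ldist : ∀ x y z : S, mul x (y + z) = mul x y + mul x z)
    (rdist : ∀ x y z : S, mul (x + y) z = mul x z + mul y z)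
    (nzd : ∀ x y : S, mul x y = 0 → x = 0 ∨ y = 0)
    (hone : one ≠ 0)
    (honeL : ∀ x : S, mul one x = x) (honeR : ∀ x : S, mul x one = x) :
    ∃ p : ℕ, p.Prime ∧ ∀ x : S, x ≠ 0 → addOrderOf x = p := by
  have mul_zero : ∀ x : S, mul x 0 = 0 := by
    intro x
    have h := ldist x 0 0
    rw [add_zero] at h
    exact (left_eq_add.mp h)
  have zero_mul : ∀ y : S, mul 0 y = 0 := by
    intro y
    have h := rdist 0 0 y
    rw [add_zero] at h
    exact (left_eq_add.mp h)
  have smul_mul : ∀ (n : ℕ) (x y : S), mul (n • x) y = n • mul x y := by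
    intro n x y
    induction n with
    | zero => simp [zero_mul]
    | succ k ih => rw [succ_nsmul, succ_nsmul, rdist, ih]
  have mul_smul : ∀ (n : ℕ) (x y : S), mul x (n • y) = n • mul x y := by
    intro n x y
    induction n with
    | zero => simp [mul_zero]
    | succ k ih => rw [succ_nsmul, succ_nsmul, ldist, ih]
  set p := addOrderOf one with hp
  have hp0 : 0 < p := addOrderOf_pos one
  have hp1 : 1 < p := by
    rcases Nat.lt_or_eq_of_le hp0 with h | h
    · exact h
    · exact absurd (AddMonoid.addOrderOf_eq_one_iff.mp h.symm) hone
  have hprime : p.Prime := by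
    by_contra hnp
    obtain ⟨m, hdvd, hm2, hmlt⟩ := Nat.exists_dvd_of_not_prime2 hp1 hnp
    obtain ⟨k, hk⟩ := hdvd
    have hk1 : 1 ≤ k := by
      rcases Nat.eq_zero_or_pos k with h | h
      · rw [h, Nat.mul_zero] at hk; omega
      · exact h
    have hklt : k < p := by
      nlinarith
    have hm0 : (m : ℕ) • one ≠ 0 := by
      intro h
      have := addOrderOf_dvd_of_nsmul_eq_zero h
      rw [← hp] at this
      exact absurd (Nat.le_of_dvd (by omega) this) (by omega)
    have hk0 : (k : ℕ) • one ≠ 0 := by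
      intro h
      have := addOrderOf_dvd_of_nsmul_eq_zero h
      rw [← hp] at this
      exact absurd (Nat.le_of_dvd (by omega) this) (by omega)
    have : mul (m • one) (k • one) = 0 := by
      rw [smul_mul, mul_smul, honeR, smul_smul, ← hk, hp, addOrderOf_nsmul_eq_zero]
    rcases nzd _ _ this with h | h
    · exact hm0 h
    · exact hk0 h
  refine ⟨p, hprime, ?_⟩
  intro x hx
  have hpx : p • x = 0 := by
    have : p • x = mul x (p • one) := by rw [mul_smul, honeR]
    rw [this, hp, addOrderOf_nsmul_eq_zero, mul_zero]
  have hdvd : addOrderOf x ∣ p := addOrderOf_dvd_of_nsmul_eq_zero hpx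
  rcases (Nat.Prime.eq_one_or_self_of_dvd hprime _ hdvd) with h | h
  · exact absurd (AddMonoid.addOrderOf_eq_one_iff.mp h) hx
  · exact h
end

section
/- Let (S, +, ∘) be a finite semifield of order n. Define a group operation on G = S × S by (x,y) ⋆ (x',y') = (x+x', y+y'+x∘x'). Then G is a group, and the set R = {(x, x∘x) : x ∈ S} is an (n,n,n,1) difference set in G relative to the subgroup N = {(0,y) : y ∈ S}; that is, every element of G ∖ N occurs exactly once as a difference r ⋆ r'⁻¹ with r, r' ∈ R, and no nonidentity element of N occurs as such a difference. -/
/-- The group operation `(x,y) ⋆ (x',y') = (x+x', y+y'+x∘x')` on `S × S`. -/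
def semifieldStar {S : Type*} [AddCommGroup S] (mul : S → S → S) :
    S × S → S × S → S × S :=
  fun p q => (p.1 + q.1, p.2 + q.2 + mul p.1 q.1)

/-- The inverse `(x,y)⁻¹ = (−x, −y + x∘x)` for the operation `⋆`. -/
def semifieldInv {S : Type*} [AddCommGroup S] (mul : S → S → S) : S × S → S × S :=
  fun p => (-p.1, -p.2 + mul p.1 p.1)

open scoped Classical in
/-- For a finite semifield `(S,+,∘)` of order `n`, the operation `⋆` makes `S × S` a group,
and `R = {(x, x∘x) : x ∈ S}` is an `(n,n,n,1)` difference set relative to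
`N = {(0,y) : y ∈ S}`: every element of `G ∖ N` occurs exactly once as a difference
`r ⋆ r'⁻¹` with `r, r' ∈ R`, and no nonidentity element of `N` occurs as such a difference. -/
theorem semifield_relative_difference_set {S : Type*} [Fintype S] [AddCommGroup S]
    (mul : S → S → S) (one : S) (hcard : 1 < Fintype.card S)
    (ldist : ∀ x y z : S, mul x (y + z) = mul x y + mul x z)
    (rdist : ∀ x y z : S, mul (x + y) z = mul x z + mul y z)
    (nzd : ∀ x y : S, mul x y = 0 → x = 0 ∨ y = 0)
    (hone : one ≠ 0)
    (honeL : ∀ x : S, mul one x = x) (honeR : ∀ x : S, mul x one = x) :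
    (∀ p q r : S × S,
        semifieldStar mul (semifieldStar mul p q) r
          = semifieldStar mul p (semifieldStar mul q r)) ∧
    (∀ p : S × S, semifieldStar mul (0, 0) p = p ∧ semifieldStar mul p (0, 0) = p) ∧
    (∀ p : S × S, semifieldStar mul p (semifieldInv mul p) = (0, 0) ∧
        semifieldStar mul (semifieldInv mul p) p = (0, 0)) ∧
    (Finset.univ.image (fun x : S => (x, mul x x))).card = Fintype.card S ∧
    (∀ g : S × S, g.1 ≠ 0 →
        ∃! ab : S × S,
          semifieldStar mul (ab.1, mul ab.1 ab.1)
            (semifieldInv mul (ab.2, mul ab.2 ab.2)) = g) ∧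
    (∀ g : S × S, g.1 = 0 → g ≠ (0, 0) →
        ¬ ∃ ab : S × S,
            semifieldStar mul (ab.1, mul ab.1 ab.1)
              (semifieldInv mul (ab.2, mul ab.2 ab.2)) = g) := by
  have h0l : ∀ x : S, mul 0 x = 0 := by
    intro x
    have := rdist 0 0 x
    simpa using this.symm
  have h0r : ∀ x : S, mul x 0 = 0 := by
    intro x
    have := ldist x 0 0
    simpa using this.symm
  have hnegr : ∀ x y : S, mul x (-y) = -mul x y := by
    intro x y
    have := ldist x y (-y)
    rw [add_neg_cancel, h0r] at this
    exact (neg_eq_of_add_eq_zero_right this.symm).symm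
  have hnegl : ∀ x y : S, mul (-x) y = -mul x y := by
    intro x y
    have := rdist x (-x) y
    rw [add_neg_cancel, h0l] at this
    exact (neg_eq_of_add_eq_zero_right this.symm).symm
  have lsub : ∀ x y z : S, mul x (y - z) = mul x y - mul x z := by
    intro x y z
    rw [sub_eq_add_neg, ldist, hnegr, ← sub_eq_add_neg]
  have rsub : ∀ x y z : S, mul (x - y) z = mul x z - mul y z := by
    intro x y z
    rw [sub_eq_add_neg, rdist, hnegl, ← sub_eq_add_neg]
  have hdiff : ∀ a b : S,
      semifieldStar mul (a, mul a a) (semifieldInv mul (b, mul b b))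
        = (a - b, mul a a - mul a b) := by
    intro a b
    simp only [semifieldStar, semifieldInv, hnegr, Prod.mk.injEq]
    constructor
    · abel
    · abel
  refine ⟨?_, ?_, ?_, ?_, ?_, ?_⟩
  · intro p q r
    simp only [semifieldStar, ldist, rdist, Prod.mk.injEq]
    exact ⟨by abel, by abel⟩
  · intro p
    simp [semifieldStar, h0l, h0r]
  · intro p
    simp only [semifieldStar, semifieldInv, hnegr, hnegl, Prod.mk.injEq]
    exact ⟨⟨by abel, by abel⟩, ⟨by abel, by abel⟩⟩
  · rw [Finset.card_image_of_injective _ (fun a b h => (Prod.mk.injEq _ _ _ _ ▸ h).1)]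
    simp
  · intro g hg1
    have hinj : Function.Injective (fun a : S => mul a g.1) := by
      intro a b hab
      have h : mul (a - b) g.1 = 0 := by
        rw [rsub]
        simp only at hab
        rw [hab, sub_self]
      rcases nzd _ _ h with h | h
      · exact sub_eq_zero.mp h
      · exact absurd h hg1
    obtain ⟨a, ha⟩ := (Finite.injective_iff_surjective.mp hinj) g.2
    have ha' : mul a g.1 = g.2 := ha
    refine ⟨(a, a - g.1), ?_, ?_⟩
    · show semifieldStar mul (a, mul a a)
        (semifieldInv mul (a - g.1, mul (a - g.1) (a - g.1))) = g
      rw [hdiff]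
      refine Prod.ext ?_ ?_
      · simp only
        abel
      · simp only
        rw [lsub]
        rw [show mul a a - (mul a a - mul a g.1) = mul a g.1 by abel, ha']
    · rintro ⟨x, y⟩ hxy
      have hxy : semifieldStar mul (x, mul x x)
          (semifieldInv mul (y, mul y y)) = g := hxy
      rw [hdiff] at hxy
      have h1 := congrArg Prod.fst hxy
      have h2 := congrArg Prod.snd hxy
      simp only at h1 h2
      have hxg : mul x g.1 = g.2 := by rw [← h1, lsub, h2]
      have hax : x = a := hinj (show mul x g.1 = mul a g.1 by rw [hxg, ha'])
      have hy2 : y = a - g.1 := by rw [← hax, ← h1]; abel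
      exact Prod.ext hax hy2
  · rintro g hg1 hg0 ⟨⟨a, b⟩, hab⟩
    have hab : semifieldStar mul (a, mul a a)
        (semifieldInv mul (b, mul b b)) = g := hab
    rw [hdiff] at hab
    have h1 := congrArg Prod.fst hab
    have h2 := congrArg Prod.snd hab
    simp only at h1 h2
    rw [hg1] at h1
    obtain rfl : a = b := sub_eq_zero.mp h1
    have : g.2 = 0 := by rw [← h2, sub_self]
    exact hg0 (Prod.ext hg1 this)
end

section
/- Let H and N be finite groups of order n, written additively, and let R be a subset of H × N. Then R is an (n,n,n,1) difference set in H × N relative to {0} × N if and only if there exists a planar function f : H → N such that R = {(x, f(x)) : x ∈ H}. -/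
open scoped Classical in
/-- Let `H` and `N` be finite (additive) groups of order `n` and `R ⊆ H × N`. Then `R` is an
`(n,n,n,1)` difference set in `H × N` relative to `{0} × N` if and only if there is a planar
function `f : H → N` with `R = {(x, f x) : x ∈ H}`. -/
theorem rds_iff_planar {H N : Type*} [AddCommGroup H] [AddCommGroup N]
    [Fintype H] [Fintype N] (n : ℕ) (hH : Fintype.card H = n) (hN : Fintype.card N = n)
    (R : Finset (H × N)) :
    (R.card = n ∧
      (∀ g : H × N, g.1 ≠ 0 →
        ((R ×ˢ R).filter (fun p => p.1 - p.2 = g)).card = 1) ∧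
      (∀ g : H × N, g.1 = 0 → g ≠ 0 →
        ((R ×ˢ R).filter (fun p => p.1 - p.2 = g)).card = 0)) ↔
    ∃ f : H → N,
      (∀ a : H, a ≠ 0 → Function.Bijective (fun x : H => f (x + a) - f x)) ∧
      (R : Set (H × N)) = {p : H × N | p.2 = f p.1} := by
  constructor
  · rintro ⟨hcard, h1, h0⟩
    -- uniqueness of the second coordinate
    have huniq : ∀ x : H, ∀ y y' : N, (x, y) ∈ R → (x, y') ∈ R → y = y' := by
      intro x y y' hy hy'
      by_contra hne
      have hg : ((0 : H), y - y') ≠ (0 : H × N) := by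
        simp [Prod.ext_iff, sub_eq_zero, hne]
      have h := h0 ((0 : H), y - y') rfl hg
      rw [Finset.card_eq_zero] at h
      have hmem : ((x, y), (x, y')) ∈
          (R ×ˢ R).filter (fun p => p.1 - p.2 = ((0 : H), y - y')) := by
        simp [Finset.mem_filter, Finset.mem_product, hy, hy', Prod.ext_iff]
      rw [h] at hmem
      exact absurd hmem (Finset.notMem_empty _)
    have hinj : Set.InjOn Prod.fst (R : Set (H × N)) := by
      intro p hp q hq hpq
      have h2 : p.2 = q.2 := by
        refine huniq p.1 p.2 q.2 ?_ ?_
        · simpa using hp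
        · rw [hpq]; simpa using hq
      exact Prod.ext hpq h2
    have himg : R.image Prod.fst = Finset.univ := by
      apply Finset.eq_univ_of_card
      rw [Finset.card_image_of_injOn hinj, hcard]; exact hH.symm
    have hex : ∀ x : H, ∃ y, (x, y) ∈ R := by
      intro x
      have hx : x ∈ R.image Prod.fst := himg ▸ Finset.mem_univ x
      obtain ⟨p, hp, hpx⟩ := Finset.mem_image.mp hx
      exact ⟨p.2, by rw [← hpx]; exact hp⟩
    set f : H → N := fun x => (hex x).choose with hf_def
    have hf : ∀ x : H, (x, f x) ∈ R := fun x => (hex x).choose_spec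
    have hmem : ∀ p : H × N, p ∈ R ↔ p.2 = f p.1 := by
      intro p
      constructor
      · intro hp
        exact huniq p.1 p.2 (f p.1) (by simpa using hp) (hf p.1)
      · intro hp
        have : p = (p.1, f p.1) := Prod.ext rfl hp
        rw [this]; exact hf p.1
    refine ⟨f, ?_, ?_⟩
    · intro a ha
      rw [Function.bijective_iff_existsUnique]
      intro b
      obtain ⟨e, he⟩ := Finset.card_eq_one.mp (h1 (a, b) ha)
      have hmemf : ∀ z : (H × N) × (H × N),
          z ∈ (R ×ˢ R).filter (fun p => p.1 - p.2 = (a, b)) ↔ z = e := by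
        intro z; rw [he, Finset.mem_singleton]
      -- existence
      have heF : e ∈ (R ×ˢ R).filter (fun p => p.1 - p.2 = (a, b)) := by
        rw [hmemf]
      rw [Finset.mem_filter, Finset.mem_product] at heF
      obtain ⟨⟨he1, he2⟩, hed⟩ := heF
      have he11 : e.1.1 - e.2.1 = a := congrArg Prod.fst hed
      have he12 : e.1.2 - e.2.2 = b := congrArg Prod.snd hed
      have hfe1 : e.1.2 = f e.1.1 := (hmem e.1).mp he1
      have hfe2 : e.2.2 = f e.2.1 := (hmem e.2).mp he2
      have hx0 : e.1.1 = e.2.1 + a := by rw [← he11]; abel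
      refine ⟨e.2.1, ?_, ?_⟩
      · show f (e.2.1 + a) - f e.2.1 = b
        rw [← hx0, ← hfe1, ← hfe2]; exact he12
      · intro x hx
        have hPx : ((x + a, f (x + a)), (x, f x)) ∈
            (R ×ˢ R).filter (fun p => p.1 - p.2 = (a, b)) := by
          rw [Finset.mem_filter, Finset.mem_product]
          refine ⟨⟨hf _, hf _⟩, ?_⟩
          have : (x + a) - x = a := by abel
          exact Prod.ext this hx
        rw [hmemf] at hPx
        have := congrArg (fun z => z.2.1) hPx
        simpa using this
    · ext p
      simp only [Finset.coe_sort_coe, Set.mem_setOf_eq, Finset.mem_coe]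
      exact hmem p
  · rintro ⟨f, hbij, hset⟩
    have hmem : ∀ p : H × N, p ∈ R ↔ p.2 = f p.1 := by
      intro p
      rw [← Finset.mem_coe, hset]
      rfl
    refine ⟨?_, ?_, ?_⟩
    · have hR : R = Finset.univ.image (fun x : H => (x, f x)) := by
        ext p
        rw [hmem]
        simp only [Finset.mem_image, Finset.mem_univ, true_and]
        constructor
        · intro hp; exact ⟨p.1, (Prod.ext rfl hp.symm)⟩
        · rintro ⟨x, hx⟩; rw [← hx]
      rw [hR, Finset.card_image_of_injective _ (fun x y hxy => congrArg Prod.fst hxy),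
        Finset.card_univ, hH]
    · intro g hg
      obtain ⟨x₀, hx₀, hx₀u⟩ :=
        Function.bijective_iff_existsUnique _ |>.mp (hbij g.1 hg) g.2
      rw [Finset.card_eq_one]
      refine ⟨((x₀ + g.1, f (x₀ + g.1)), (x₀, f x₀)), ?_⟩
      ext z
      rw [Finset.mem_filter, Finset.mem_product, Finset.mem_singleton, hmem, hmem]
      constructor
      · rintro ⟨⟨h1', h2'⟩, hd⟩
        have hd1 : z.1.1 - z.2.1 = g.1 := congrArg Prod.fst hd
        have hd2 : z.1.2 - z.2.2 = g.2 := congrArg Prod.snd hd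
        have hz11 : z.1.1 = z.2.1 + g.1 := by rw [← hd1]; abel
        have hsol : f (z.2.1 + g.1) - f z.2.1 = g.2 := by
          rw [← hz11, ← h1', ← h2']; exact hd2
        have hx : z.2.1 = x₀ := hx₀u z.2.1 hsol
        have hz1 : z.1 = (x₀ + g.1, f (x₀ + g.1)) := by
          apply Prod.ext
          · rw [hz11, hx]
          · rw [h1', hz11, hx]
        have hz2 : z.2 = (x₀, f x₀) := by
          apply Prod.ext
          · exact hx
          · rw [h2', hx]
        exact Prod.ext hz1 hz2
      · intro hz
        have hz1 : z.1 = (x₀ + g.1, f (x₀ + g.1)) := congrArg Prod.fst hz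
        have hz2 : z.2 = (x₀, f x₀) := congrArg Prod.snd hz
        refine ⟨⟨by rw [hz1], by rw [hz2]⟩, ?_⟩
        rw [hz1, hz2]
        apply Prod.ext
        · show (x₀ + g.1) - x₀ = g.1; abel
        · exact hx₀
    · intro g hg1 hgne
      rw [Finset.card_eq_zero, Finset.filter_eq_empty_iff]
      intro z hz
      rw [Finset.mem_product, hmem, hmem] at hz
      intro hd
      have hd1 : z.1.1 - z.2.1 = g.1 := congrArg Prod.fst hd
      have hd2 : z.1.2 - z.2.2 = g.2 := congrArg Prod.snd hd
      rw [hg1, sub_eq_zero] at hd1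
      have : z.1.2 = z.2.2 := by rw [hz.1, hz.2, hd1]
      have hg2 : g.2 = 0 := by rw [← hd2, this, sub_self]
      exact hgne (Prod.ext hg1 hg2)
end

section
/- Let f : F_{2^m} → F_{2^m}. Define an operation on G = F_{2^m} × F_{2^m} by (x,y) ⋆ (x',y') = (x+x', y+y'+xx'), where xx' is field multiplication. Then the set R = {(x, f(x)) : x ∈ F_{2^m}} is a (2^m, 2^m, 2^m, 1) difference set in (G, ⋆) relative to {0} × F_{2^m} if and only if f is planar in the modified sense, i.e., for every nonzero a ∈ F_{2^m}, the map x ↦ f(x+a) + f(x) + ax is a permutation of F_{2^m}. -/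
open scoped Classical in
/-- For `q = 2^m` and `G = F_q × F_q` with `(x,y) ⋆ (x',y') = (x+x', y+y'+xx')`, the set
`R = {(x, f x)}` is a `(2^m,2^m,2^m,1)` difference set relative to `{0} × F_q` if and only
if `f` is planar in the modified sense: `x ↦ f(x+a)+f(x)+ax` is a permutation for all
nonzero `a`. -/
theorem rds_in_Z4_group_iff_modified_planar {F : Type*} [Field F] [Fintype F] (m : ℕ)
    (hF : Fintype.card F = 2 ^ m) (f : F → F) :
    let star : F × F → F × F → F × F :=
      fun p q => (p.1 + q.1, p.2 + q.2 + p.1 * q.1)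
    let inv : F × F → F × F := fun p => (-p.1, -p.2 + p.1 * p.1)
    let R : Finset (F × F) := Finset.univ.image (fun x : F => (x, f x))
    (R.card = 2 ^ m ∧
      (∀ g : F × F, g.1 ≠ 0 →
        ((R ×ˢ R).filter (fun p => star p.1 (inv p.2) = g)).card = 1) ∧
      (∀ g : F × F, g.1 = 0 → g ≠ (0, 0) →
        ((R ×ˢ R).filter (fun p => star p.1 (inv p.2) = g)).card = 0)) ↔
    (∀ a : F, a ≠ 0 →
      Function.Bijective (fun x : F => f (x + a) + f x + a * x)) := by
  intro star inv R
  -- characteristic 2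
  haveI hchar : CharP F 2 := by
    have h1 : CharP F (ringChar F) := ringChar.charP F
    haveI := h1
    obtain ⟨n, hn⟩ := FiniteField.card F (ringChar F)
    haveI := h1
    have hp : Nat.Prime (ringChar F) := CharP.char_is_prime F (ringChar F)
    have hdvd : ringChar F ∣ 2 ^ m := by
      rw [← hF, hn.2]
      exact dvd_pow_self _ (by exact_mod_cast n.2.ne')
    have : ringChar F = 2 := by
      have := (Nat.Prime.dvd_of_dvd_pow hp hdvd)
      exact (Nat.prime_dvd_prime_iff_eq hp Nat.prime_two).mp this
    rwa [this] at h1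
  have hneg : ∀ x : F, -x = x := fun x => CharTwo.neg_eq x
  have hadd : ∀ x : F, x + x = 0 := fun x => CharTwo.add_self_eq_zero x
  -- key counting identity
  have key : ∀ a b : F,
      ((R ×ˢ R).filter (fun p => star p.1 (inv p.2) = (a, b))).card
        = (Finset.univ.filter (fun x : F => f (x + a) + f x + a * x = b)).card := by
    intro a b
    apply Finset.card_bij' (fun p _ => p.2.1)
      (fun x _ => ((x + a, f (x + a)), (x, f x)))
    · -- hi
      rintro ⟨⟨p1, p2⟩, q1, q2⟩ hp
      simp only [R, Finset.mem_filter, Finset.mem_product, Finset.mem_image, Finset.mem_univ, true_and] at hp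
      obtain ⟨⟨⟨x, hx⟩, ⟨x', hx'⟩⟩, heq⟩ := hp
      injection hx with hx1 hx2
      injection hx' with hx1' hx2'
      subst hx1; subst hx2; subst hx1'; subst hx2'
      simp only [star, inv, Prod.mk.injEq] at heq
      obtain ⟨h1, h2⟩ := heq
      simp only [Finset.mem_filter, Finset.mem_univ, true_and]
      have hxa : x = x' + a := by
        rw [hneg] at h1
        rw [← h1]; ring_nf; simp [CharTwo.two_eq_zero]
      subst hxa
      rw [← h2, hneg, hneg]
      ring_nf
      simp [CharTwo.two_eq_zero]
    · -- hj
      intro x _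
      simp only [R, Finset.mem_filter, Finset.mem_product, Finset.mem_image, Finset.mem_univ, true_and]
      exact ⟨⟨⟨x + a, rfl⟩, ⟨x, rfl⟩⟩, by
        simp only [star, inv, Prod.mk.injEq, hneg]
        constructor
        · rw [add_comm x a, add_assoc, hadd, add_zero]
        · have hx := Finset.mem_filter.mp ‹x ∈ Finset.univ.filter
            (fun x : F => f (x + a) + f x + a * x = b)›
          rw [← hx.2]
          ring_nf
          simp [CharTwo.two_eq_zero]⟩
    · rintro ⟨⟨p1, p2⟩, q1, q2⟩ hp
      simp only [R, Finset.mem_filter, Finset.mem_product, Finset.mem_image, Finset.mem_univ, true_and] at hp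
      obtain ⟨⟨⟨x, hx⟩, ⟨x', hx'⟩⟩, heq⟩ := hp
      injection hx with hx1 hx2
      injection hx' with hx1' hx2'
      subst hx1; subst hx2; subst hx1'; subst hx2'
      simp only [star, inv, Prod.mk.injEq] at heq
      have hxa : x = x' + a := by
        rw [hneg] at heq
        rw [← heq.1]; ring_nf; simp [CharTwo.two_eq_zero]
      simp [hxa]
    · intro x _
      rfl
  -- counting lemma for bijectivity
  have hbij : ∀ (φ : F → F), Function.Bijective φ ↔
      ∀ b, (Finset.univ.filter (fun x => φ x = b)).card = 1 := by
    intro φ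
    rw [Function.bijective_iff_existsUnique]
    constructor
    · intro h b
      obtain ⟨x, hx, hu⟩ := h b
      rw [Finset.card_eq_one]
      refine ⟨x, Finset.eq_singleton_iff_unique_mem.mpr ⟨by simp [hx], fun y hy => ?_⟩⟩
      exact hu y (Finset.mem_filter.mp hy).2
    · intro h b
      obtain ⟨x, hx⟩ := Finset.card_eq_one.mp (h b)
      refine ⟨x, ?_, fun y hy => ?_⟩
      · have := hx ▸ Finset.mem_singleton_self x
        exact (Finset.mem_filter.mp this).2
      · have : y ∈ Finset.univ.filter (fun x => φ x = b) := by simp [hy]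
        rw [hx, Finset.mem_singleton] at this
        exact this
  constructor
  · rintro ⟨-, h1, -⟩ a ha
    rw [hbij]
    intro b
    rw [← key a b]
    exact h1 (a, b) ha
  · intro h
    refine ⟨?_, ?_, ?_⟩
    · rw [← hF, ← Finset.card_univ]
      apply Finset.card_image_of_injective
      intro x y hxy
      exact (Prod.mk.injEq _ _ _ _ ▸ hxy).1
    · rintro ⟨a, b⟩ ha
      rw [key a b, ← hbij _ |>.mp (h a ha) b]
    · rintro ⟨a, b⟩ ha hab
      simp only at ha
      subst ha
      have hb : b ≠ 0 := fun hb => hab (by rw [hb])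
      rw [key 0 b, Finset.card_eq_zero, Finset.filter_eq_empty_iff]
      intro x _
      simp only [add_zero, zero_mul]
      rw [hadd (f x)]
      exact fun h0 => hb h0.symm
end

section
/- For q = 2^m, the set G = F_q × F_q with operation (x,y) ⋆ (x',y') = (x+x', y+y'+xx') is an abelian group in which every element of G outside the subgroup N = {0} × F_q has order 4, and N is elementary abelian of order 2^m; consequently G is isomorphic to Z_4^m. -/
namespace StarAux

variable (F : Type*) [Field F]

def G2 := F × F

variable {F}

instance : Add (G2 F) := ⟨fun p q => ((p.1 + q.1, p.2 + q.2 + p.1 * q.1) : F × F)⟩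
instance : Zero (G2 F) := ⟨((0, 0) : F × F)⟩
instance : Neg (G2 F) := ⟨fun p => ((-p.1, p.1 ^ 2 - p.2) : F × F)⟩

lemma add_def (p q : G2 F) : p + q = ((p.1 + q.1, p.2 + q.2 + p.1 * q.1) : F × F) := rfl
lemma zero_def : (0 : G2 F) = ((0, 0) : F × F) := rfl
lemma neg_def (p : G2 F) : -p = ((-p.1, p.1 ^ 2 - p.2) : F × F) := rfl

instance : AddCommGroup (G2 F) where
  add_assoc p q r := by
    rw [add_def, add_def, add_def, add_def]; refine Prod.ext ?_ ?_ <;> dsimp only <;> ring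
  zero_add p := by
    rw [add_def, zero_def]; refine Prod.ext ?_ ?_ <;> · simp
  add_zero p := by
    rw [add_def, zero_def]; refine Prod.ext ?_ ?_ <;> · simp
  nsmul := nsmulRec
  zsmul := zsmulRec
  neg_add_cancel p := by
    rw [add_def, neg_def, zero_def]; refine Prod.ext ?_ ?_ <;> dsimp only <;> ring
  add_comm p q := by
    rw [add_def, add_def]; refine Prod.ext ?_ ?_ <;> dsimp only <;> ring

instance [Fintype F] : Fintype (G2 F) := inferInstanceAs (Fintype (F × F))

def mk (x y : F) : G2 F := ((x, y) : F × F)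

lemma mk_fst (x y : F) : (mk x y).1 = x := rfl
lemma mk_snd (x y : F) : (mk x y).2 = y := rfl

/-- first projection as an additive hom -/
def pi1 : G2 F →+ F where
  toFun p := p.1
  map_zero' := rfl
  map_add' p q := rfl

/-- embedding of the second coordinate -/
def j : F →+ G2 F where
  toFun y := ((0, y) : F × F)
  map_zero' := rfl
  map_add' y y' := by
    show ((0, y + y') : F × F) = ((0 + 0, y + y' + 0 * 0) : F × F)
    rw [Prod.mk.injEq]; constructor <;> ring

lemma j_injective : Function.Injective (j (F := F)) := by
  intro a b h
  exact congrArg (fun p : G2 F => (p : F × F).2) h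

section Char2

variable [CharP F 2]

lemma add_self (g : G2 F) : g + g = ((0, g.1 ^ 2) : F × F) := by
  rw [add_def]; refine Prod.ext ?_ ?_ <;> dsimp only
  · exact CharTwo.add_self_eq_zero _
  · rw [← pow_two]; simp [CharTwo.add_self_eq_zero]

lemma four_nsmul (g : G2 F) : (4 : ℕ) • g = 0 := by
  have : (4 : ℕ) • g = (g + g) + (g + g) := by
    rw [show (4:ℕ) = 2 * 2 by norm_num, mul_nsmul, two_nsmul, two_nsmul]
  rw [this, add_self, add_def, zero_def]; refine Prod.ext ?_ ?_ <;> dsimp only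
  all_goals simp [CharTwo.add_self_eq_zero]

instance : Module (ZMod 4) (G2 F) := AddCommGroup.zmodModule four_nsmul

lemma zmod_smul (c : ZMod 4) (g : G2 F) : c • g = c.val • g := by
  conv_lhs => rw [← ZMod.natCast_rightInverse c]
  exact Nat.cast_smul_eq_nsmul _ _ _

lemma smul_cases (c : ZMod 4) (x : F) :
    c • (mk x 0) =
      if c = 0 then mk 0 0 else if c = 1 then mk x 0
      else if c = 2 then mk 0 (x^2) else mk x (x^2) := by
  have h1 : mk x 0 + mk x 0 = mk 0 (x^2) := by
    rw [add_self]; rfl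
  have h2 : mk 0 (x^2) + mk x 0 = mk x (x^2) := by
    show ((_, _) : F × F) = _
    rw [mk_fst, mk_snd, mk_fst, mk_snd]
    unfold mk; rw [Prod.mk.injEq]; constructor <;> ring
  have hz : mk (0:F) 0 = 0 := rfl
  have h3 : (3 : ℕ) • (mk x 0) = 2 • (mk x 0) + mk x 0 := by
    rw [← succ_nsmul]
  have h2' := two_nsmul (mk x 0)
  have hc : c = 0 ∨ c = 1 ∨ c = 2 ∨ c = 3 := by
    fin_cases c
    · exact Or.inl rfl
    · exact Or.inr (Or.inl rfl)
    · exact Or.inr (Or.inr (Or.inl rfl))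
    · exact Or.inr (Or.inr (Or.inr rfl))
  rcases hc with rfl | rfl | rfl | rfl <;> rw [zmod_smul]
  · rw [if_pos rfl, show ZMod.val (0 : ZMod 4) = 0 from rfl, zero_nsmul, hz]
  · rw [if_neg (by decide), if_pos rfl, show ZMod.val (1 : ZMod 4) = 1 from rfl, one_nsmul]
  · rw [if_neg (by decide), if_neg (by decide), if_pos rfl,
      show ZMod.val (2 : ZMod 4) = 2 from rfl, h2', h1]
  · rw [if_neg (by decide), if_neg (by decide), if_neg (by decide),
      show ZMod.val (3 : ZMod 4) = 3 from rfl, h3, h2', h1, h2]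

instance : Algebra (ZMod 2) F := ZMod.algebra F 2

/-- the mod-2 reduction map `ZMod 4 → ZMod 2` -/
def cast2 : ZMod 4 → ZMod 2 := fun c => if c = 0 ∨ c = 2 then 0 else 1

lemma zmod4_cases (c : ZMod 4) : c = 0 ∨ c = 1 ∨ c = 2 ∨ c = 3 := by
  fin_cases c
  · exact Or.inl rfl
  · exact Or.inr (Or.inl rfl)
  · exact Or.inr (Or.inr (Or.inl rfl))
  · exact Or.inr (Or.inr (Or.inr rfl))

lemma pi1_smul (c : ZMod 4) (x : F) : pi1 (c • mk x 0) = (cast2 c) • x := by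
  have e0 : pi1 (mk (0:F) 0) = 0 := rfl
  have ex : pi1 (mk x 0) = x := rfl
  have ex2 : pi1 (mk (0:F) (x^2)) = 0 := rfl
  have exx2 : pi1 (mk x (x^2)) = x := rfl
  rcases zmod4_cases c with rfl | rfl | rfl | rfl
  · rw [smul_cases, if_pos rfl, e0, show cast2 0 = 0 by decide, zero_smul]
  · rw [smul_cases, if_neg (by decide), if_pos rfl, ex, show cast2 1 = 1 by decide, one_smul]
  · rw [smul_cases, if_neg (by decide), if_neg (by decide), if_pos rfl, ex2,
      show cast2 2 = 0 by decide, zero_smul]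
  · rw [smul_cases, if_neg (by decide), if_neg (by decide), if_neg (by decide), exx2,
      show cast2 3 = 1 by decide, one_smul]

lemma smul_eq_j (c : ZMod 4) (x : F) (h : cast2 c = 0) :
    c • mk x 0 = j (((if c = 2 then (1 : ZMod 2) else 0) • x) ^ 2) := by
  rcases zmod4_cases c with rfl | rfl | rfl | rfl
  · rw [smul_cases, if_pos rfl, if_neg (by decide)]
    show mk 0 0 = mk 0 _
    unfold mk; refine Prod.ext ?_ ?_ <;> simp
  · exact absurd h (by decide)
  · rw [smul_cases, if_neg (by decide), if_neg (by decide), if_pos rfl, if_pos rfl]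
    show mk 0 (x^2) = mk 0 _
    rw [one_smul]
  · exact absurd h (by decide)

lemma cast2_eq_zero_of (c : ZMod 4) (h : cast2 c = 0)
    (h2 : (if c = 2 then (1 : ZMod 2) else 0) = 0) : c = 0 := by
  rcases zmod4_cases c with rfl | rfl | rfl | rfl
  · rfl
  · exact absurd h (by decide)
  · exact absurd h2 (by simp)
  · exact absurd h (by decide)

section Basis

variable {k : ℕ} (b : Module.Basis (Fin k) (ZMod 2) F)

/-- the candidate isomorphism -/
noncomputable def phi : (Fin k → ZMod 4) → G2 F := fun c => ∑ i, c i • mk (b i) 0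

lemma phi_add (c d : Fin k → ZMod 4) : phi b (c + d) = phi b c + phi b d := by
  simp only [phi, Pi.add_apply, add_smul]
  rw [Finset.sum_add_distrib]

/-- `phi` as an additive hom -/
noncomputable def phiHom : (Fin k → ZMod 4) →+ G2 F := AddMonoidHom.mk' (phi b) (phi_add b)

lemma phi_injective : Function.Injective (phi b) := by
  have : Function.Injective (phiHom b) := by
    rw [injective_iff_map_eq_zero]
    intro c hc
    have hc' : phi b c = 0 := hc
    -- first coordinates vanish
    have hfst : ∑ i, (cast2 (c i)) • (b i) = 0 := by
      have h1 : pi1 (phi b c) = ∑ i, (cast2 (c i)) • (b i) := by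
        rw [phi, map_sum]
        exact Finset.sum_congr rfl fun i _ => pi1_smul _ _
      rw [hc', map_zero] at h1
      exact h1.symm
    have hcz : ∀ i, cast2 (c i) = 0 :=
      Fintype.linearIndependent_iff.mp b.linearIndependent _ hfst
    set d : Fin k → ZMod 2 := fun i => if c i = 2 then 1 else 0 with hd
    have hphi : phi b c = j ((∑ i, d i • b i) ^ 2) := by
      rw [phi]
      have : ∀ i ∈ Finset.univ, c i • mk (b i) 0 = j ((d i • b i) ^ 2) :=
        fun i _ => smul_eq_j _ _ (hcz i)
      rw [Finset.sum_congr rfl this, ← map_sum, ← CharTwo.sum_sq]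
    rw [hphi] at hc'
    have hsq : (∑ i, d i • b i) ^ 2 = 0 := j_injective (by rw [hc', map_zero])
    have hsum : ∑ i, d i • b i = 0 := by
      exact pow_eq_zero_iff (by norm_num) |>.mp hsq
    have hdz : ∀ i, d i = 0 :=
      Fintype.linearIndependent_iff.mp b.linearIndependent _ hsum
    funext i
    exact cast2_eq_zero_of _ (hcz i) (hdz i)
  exact this

lemma phi_bijective [Fintype F] : Function.Bijective (phi b) := by
  rw [Fintype.bijective_iff_injective_and_card]
  refine ⟨phi_injective b, ?_⟩
  have hF : Fintype.card F = 2 ^ k := by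
    rw [Module.card_fintype b, ZMod.card, Fintype.card_fin]
  have : Fintype.card (G2 F) = Fintype.card F * Fintype.card F :=
    Fintype.card_prod F F
  rw [this, hF, Fintype.card_fun, ZMod.card, Fintype.card_fin, ← pow_add,
    ← two_mul k, pow_mul]
  norm_num

end Basis

end Char2

end StarAux

/-- For `q = 2^m`, the set `G = F_q × F_q` with `(x,y) ⋆ (x',y') = (x+x', y+y'+xx')` is an
abelian group in which every element outside `N = {0} × F_q` has order `4`, every element
of `N` has order at most `2` (so `N` is elementary abelian of order `2^m`), and `G` is
isomorphic to `Z_4^m`. -/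
theorem star_group_isomorphic_Z4m {F : Type*} [Field F] [Fintype F] (m : ℕ)
    (hF : Fintype.card F = 2 ^ m) :
    let star : F × F → F × F → F × F :=
      fun p q => (p.1 + q.1, p.2 + q.2 + p.1 * q.1)
    (∀ p q : F × F, star p q = star q p) ∧
    (∀ p q r : F × F, star (star p q) r = star p (star q r)) ∧
    (∀ p : F × F, star (0, 0) p = p) ∧
    (∀ p : F × F, p.1 ≠ 0 →
      star p p ≠ (0, 0) ∧ star (star p p) (star p p) = (0, 0)) ∧
    (∀ p : F × F, p.1 = 0 → star p p = (0, 0)) ∧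
    ∃ e : (F × F) ≃ (Fin m → ZMod 4), ∀ p q : F × F, e (star p q) = e p + e q := by
  intro star
  -- `F` has characteristic 2
  have hchar : ringChar F = 2 := by
    obtain ⟨n, hp, hcard⟩ := FiniteField.card F (ringChar F)
    have hdvd : ringChar F ∣ 2 ^ m := by
      rw [← hF, hcard]
      exact dvd_pow_self _ (by positivity)
    exact (Nat.prime_dvd_prime_iff_eq hp Nat.prime_two).mp (hp.dvd_of_dvd_pow hdvd)
  haveI : CharP F 2 := hchar ▸ ringChar.charP F
  have h2 : ∀ x : F, x + x = 0 := fun x => CharTwo.add_self_eq_zero x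
  refine ⟨?_, ?_, ?_, ?_, ?_, ?_⟩
  · intro p q; simp only [star]; rw [Prod.mk.injEq]; constructor <;> ring
  · intro p q r; simp only [star]; rw [Prod.mk.injEq]; constructor <;> ring
  · intro p; simp only [star]; simp
  · intro p hp
    have hself : star p p = (0, p.1 * p.1) := by
      simp only [star]; rw [Prod.mk.injEq]
      refine ⟨h2 _, ?_⟩
      rw [h2 p.2, zero_add]
    constructor
    · rw [hself]
      intro hcon
      rw [Prod.mk.injEq] at hcon
      exact hp (mul_self_eq_zero.mp hcon.2)
    · rw [hself]
      simp only [star]; rw [Prod.mk.injEq]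
      constructor
      · simp
      · rw [mul_zero, add_zero]; exact h2 _
  · intro p hp
    simp only [star, hp]; rw [Prod.mk.injEq]
    refine ⟨h2 _, ?_⟩
    rw [mul_zero, h2 p.2, zero_add]
  · -- the isomorphism
    haveI : Module.Finite (ZMod 2) F := Module.Finite.of_finite
    let b0 := Module.finBasis (ZMod 2) F
    have hk : Module.finrank (ZMod 2) F = m := by
      have hc := Module.card_fintype b0
      rw [ZMod.card, Fintype.card_fin, hF] at hc
      exact Nat.pow_right_injective (le_refl 2) hc.symm
    let b : Module.Basis (Fin m) (ZMod 2) F := b0.reindex (finCongr hk)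
    have hbij := StarAux.phi_bijective b
    let E : (Fin m → ZMod 4) ≃ StarAux.G2 F := Equiv.ofBijective _ hbij
    refine ⟨E.symm, ?_⟩
    intro p q
    let toG2 : F × F → StarAux.G2 F := id
    have hstar : star p q = toG2 p + toG2 q := rfl
    have hphiE : ∀ a : Fin m → ZMod 4, E a = StarAux.phi b a := fun _ => rfl
    have key : E (E.symm (toG2 p) + E.symm (toG2 q)) = toG2 p + toG2 q := by
      rw [hphiE, StarAux.phi_add, ← hphiE, ← hphiE, E.apply_symm_apply, E.apply_symm_apply]
    calc E.symm (star p q) = E.symm (E (E.symm (toG2 p) + E.symm (toG2 q))) := by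
          rw [key, hstar]
    _ = E.symm (toG2 p) + E.symm (toG2 q) := E.symm_apply_apply _
end

section
/- Let q be an odd prime power and let f : F_q → F_q be given by a Dembowski-Ostrom polynomial, i.e., f(x) = Σ_{0 ≤ i ≤ j < m} a_{ij} x^{p^i + p^j} where q = p^m. Then f is planar (every nonzero difference map x ↦ f(x+a) − f(x) is bijective) if and only if f is 2-to-1, i.e., for every nonzero b ∈ F_q the equation f(x) = b has either 0 or exactly 2 solutions, and f(x) = 0 has only the solution x = 0. -/
open scoped Classical in
/-- A Dembowski-Ostrom polynomial `f(x) = Σ_{0 ≤ i ≤ j < m} a_{ij} x^{p^i+p^j}` over `F_q`,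
`q = p^m` odd, is planar if and only if `f` is `2`-to-`1`: `f(x) = b` has `0` or `2`
solutions for every nonzero `b`, and `f(x) = 0` only for `x = 0`. -/
theorem DO_planar_iff_two_to_one {F : Type*} [Field F] [Fintype F] (p m : ℕ)
    (hp : p.Prime) (hodd : Odd p) [CharP F p] (hF : Fintype.card F = p ^ m)
    (a : ℕ → ℕ → F) (f : F → F)
    (hf : ∀ x : F, f x = ∑ i ∈ Finset.range m, ∑ j ∈ Finset.range m,
      if i ≤ j then a i j * x ^ (p ^ i + p ^ j) else 0) :
    (∀ t : F, t ≠ 0 → Function.Bijective (fun x : F => f (x + t) - f x)) ↔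
      ((∀ b : F, b ≠ 0 →
          (Finset.univ.filter (fun x : F => f x = b)).card = 0 ∨
          (Finset.univ.filter (fun x : F => f x = b)).card = 2) ∧
        (∀ x : F, f x = 0 → x = 0)) := by
  haveI := Fact.mk hp
  have htwo : (2 : F) ≠ 0 := by
    intro h
    have h2 : p ∣ 2 := (CharP.cast_eq_zero_iff F p 2).mp (by exact_mod_cast h)
    have := (Nat.prime_dvd_prime_iff_eq hp Nat.prime_two).mp h2
    rw [this] at hodd
    simp [Nat.odd_iff] at hodd
  have hhalf : ∀ u : F, u = -u → u = 0 := by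
    intro u h
    have : (2 : F) * u = 0 := by linear_combination h
    rcases mul_eq_zero.mp this with h' | h'
    · exact absurd h' htwo
    · exact h'
  -- f 0 = 0
  have hf0 : f 0 = 0 := by
    rw [hf]
    refine Finset.sum_eq_zero fun i _ => Finset.sum_eq_zero fun j _ => ?_
    split
    · rw [zero_pow (add_pos (pow_pos hp.pos i) (pow_pos hp.pos j)).ne', mul_zero]
    · rfl
  -- f (-x) = f x
  have hfneg : ∀ x : F, f (-x) = f x := by
    intro x
    rw [hf, hf]
    refine Finset.sum_congr rfl fun i _ => Finset.sum_congr rfl fun j _ => ?_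
    split
    · rw [(Odd.add_odd hodd.pow hodd.pow).neg_pow]
    · rfl
  set B : F → F → F := fun x y => ∑ i ∈ Finset.range m, ∑ j ∈ Finset.range m,
      if i ≤ j then a i j * (x ^ (p ^ i) * y ^ (p ^ j) + y ^ (p ^ i) * x ^ (p ^ j)) else 0
      with hBdef
  have hB : ∀ x y : F, f (x + y) = f x + f y + B x y := by
    intro x y
    rw [hf, hf, hf, hBdef]
    rw [← Finset.sum_add_distrib, ← Finset.sum_add_distrib]
    refine Finset.sum_congr rfl fun i _ => ?_
    rw [← Finset.sum_add_distrib, ← Finset.sum_add_distrib]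
    refine Finset.sum_congr rfl fun j _ => ?_
    split
    · rw [pow_add, pow_add, pow_add, add_pow_char_pow, add_pow_char_pow]
      ring
    · simp
  have hBneg : ∀ x y : F, B x (-y) = -B x y := by
    intro x y
    have key : B x (-y) + B x y = 0 := by
      rw [hBdef]
      rw [← Finset.sum_add_distrib]
      refine Finset.sum_eq_zero fun i _ => ?_
      rw [← Finset.sum_add_distrib]
      refine Finset.sum_eq_zero fun j _ => ?_
      split
      · rw [(hodd.pow (n := j)).neg_pow, (hodd.pow (n := i)).neg_pow]
        ring
      · simp
    linear_combination key
  have hBadd : ∀ x z y : F, B (x + z) y = B x y + B z y := by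
    intro x z y
    rw [hBdef]
    rw [← Finset.sum_add_distrib]
    refine Finset.sum_congr rfl fun i _ => ?_
    rw [← Finset.sum_add_distrib]
    refine Finset.sum_congr rfl fun j _ => ?_
    split
    · rw [add_pow_char_pow, add_pow_char_pow]
      ring
    · simp
  constructor
  · -- planar → 2-to-1
    intro H
    have hpm : ∀ u v : F, f u = f v → u = v ∨ u = -v := by
      intro u v huv
      by_cases h : u = v
      · exact Or.inl h
      · right
        have ht : u - v ≠ 0 := sub_ne_zero.mpr h
        have hinj := (H (u - v) ht).injective
        have e1 : f (v + (u - v)) - f v = 0 := by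
          rw [add_sub_cancel, huv, sub_self]
        have e2 : f (-u + (u - v)) - f (-u) = 0 := by
          have h3 : -u + (u - v) = -v := by ring
          rw [h3, hfneg, hfneg, huv, sub_self]
        have := hinj (a₁ := v) (a₂ := -u) (by simp only; rw [e1, e2])
        rw [this]; ring
    have h2 : ∀ x : F, f x = 0 → x = 0 := by
      intro x hx
      rcases hpm x 0 (by rw [hx, hf0]) with h | h
      · exact h
      · simpa using h
    refine ⟨?_, h2⟩
    intro b hb
    by_cases hex : ∃ u, f u = b
    · obtain ⟨u, hu⟩ := hex
      right
      have hu0 : u ≠ 0 := by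
        rintro rfl; rw [hf0] at hu; exact hb hu.symm
      have hne : u ≠ -u := fun h => hu0 (hhalf u h)
      have hset : Finset.univ.filter (fun x : F => f x = b) = {u, -u} := by
        ext x
        simp only [Finset.mem_filter, Finset.mem_univ, true_and, Finset.mem_insert,
          Finset.mem_singleton]
        constructor
        · intro hx
          exact hpm x u (hx.trans hu.symm)
        · rintro (rfl | rfl)
          · exact hu
          · rw [hfneg]; exact hu
      rw [hset, Finset.card_insert_of_notMem (by simpa using hne), Finset.card_singleton]
    · left
      rw [Finset.card_eq_zero, Finset.filter_eq_empty_iff]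
      intro x _ hx
      exact hex ⟨x, hx⟩
  · -- 2-to-1 → planar
    rintro ⟨h1, h2⟩
    have key2 : ∀ u v : F, f u = f v → u = v ∨ u = -v := by
      intro u v huv
      by_cases hu : f u = 0
      · left
        rw [h2 u hu, h2 v (by rw [← huv]; exact hu)]
      · have hcard := h1 (f u) hu
        have humem : u ∈ Finset.univ.filter (fun x : F => f x = f u) := by
          simp
        have hc2 : (Finset.univ.filter (fun x : F => f x = f u)).card = 2 := by
          rcases hcard with h | h
          · exact absurd (Finset.card_eq_zero.mp h ▸ humem) (by simp)
          · exact h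
        have hu0 : u ≠ 0 := by
          rintro rfl; exact hu hf0
        have hne : u ≠ -u := fun h => hu0 (hhalf u h)
        have hsub : ({u, -u} : Finset F) ⊆ Finset.univ.filter (fun x : F => f x = f u) := by
          intro x hx
          simp only [Finset.mem_insert, Finset.mem_singleton] at hx
          rcases hx with rfl | rfl
          · simp
          · simp [hfneg]
        have hcardpair : ({u, -u} : Finset F).card = 2 := by
          rw [Finset.card_insert_of_notMem (by simpa using hne), Finset.card_singleton]
        have heq := Finset.eq_of_subset_of_card_le hsub (by rw [hc2, hcardpair])
        have hv : v ∈ ({u, -u} : Finset F) := by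
          rw [heq]
          simp [huv.symm]
        simp only [Finset.mem_insert, Finset.mem_singleton] at hv
        rcases hv with rfl | rfl
        · exact Or.inl rfl
        · exact Or.inr (by rw [neg_neg])
    intro t ht
    rw [← Finite.injective_iff_bijective]
    intro x y hxy
    simp only at hxy
    have hBxy : B x t = B y t := by
      have ex := hB x t
      have ey := hB y t
      rw [ex, ey] at hxy
      linear_combination hxy
    set z := x - y with hz
    have hxyz : x = y + z := by rw [hz]; ring
    have hBz : B z t = 0 := by
      have := hBadd y z t
      rw [← hxyz, hBxy] at this
      linear_combination -this
    have e1 : f (z + t) = f z + f t := by rw [hB z t, hBz, add_zero]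
    have e2 : f (z - t) = f z + f t := by
      have : z - t = z + (-t) := by ring
      rw [this, hB z (-t), hBneg, hBz, hfneg, neg_zero, add_zero]
    rcases key2 (z + t) (z - t) (by rw [e1, e2]) with h | h
    · exfalso
      apply ht
      apply hhalf
      linear_combination h
    · have hz0 : z = 0 := by
        apply hhalf
        linear_combination h
      exact sub_eq_zero.mp hz0
end

section
/- Let p be an odd prime and k, m positive integers. The monomial function f(x) = x^{p^k + 1} on F_{p^m} is planar if and only if m / gcd(k, m) is odd. -/
/-- gcd of `a^k - 1` and `a^m - 1` is `a^gcd(k,m) - 1`. -/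
lemma aux_gcd_pow_sub_one (a : ℕ) (ha : 2 ≤ a) (k m : ℕ) (hk : 0 < k) (hm : 0 < m) :
    Nat.gcd (a ^ k - 1) (a ^ m - 1) = a ^ Nat.gcd k m - 1 := by
  set d := Nat.gcd (a ^ k - 1) (a ^ m - 1) with hd
  have hpow : ∀ n : ℕ, 1 ≤ a ^ n := fun n => Nat.one_le_pow _ _ (by omega)
  have h2k : 2 ≤ a ^ k := le_trans ha (Nat.le_self_pow hk.ne' a)
  have hd0 : 0 < d := Nat.gcd_pos_of_pos_left _ (by omega)
  have : NeZero d := ⟨hd0.ne'⟩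
  have key : ∀ n : ℕ, ((a : ZMod d)) ^ n = 1 ↔ d ∣ a ^ n - 1 := by
    intro n
    rw [← ZMod.natCast_eq_zero_iff]
    have h1 : ((a ^ n - 1 : ℕ) : ZMod d) = (a : ZMod d) ^ n - 1 := by
      push_cast [Nat.cast_sub (hpow n)]; ring
    rw [h1, sub_eq_zero, eq_comm]
  apply Nat.dvd_antisymm
  · rw [← key]
    exact pow_gcd_eq_one.mpr ⟨(key k).mpr (Nat.gcd_dvd_left _ _),
      (key m).mpr (Nat.gcd_dvd_right _ _)⟩
  · apply Nat.dvd_gcd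
    · have h := Nat.sub_dvd_pow_sub_pow (a ^ Nat.gcd k m) 1 (k / Nat.gcd k m)
      rwa [one_pow, ← pow_mul, Nat.mul_div_cancel' (Nat.gcd_dvd_left k m)] at h
    · have h := Nat.sub_dvd_pow_sub_pow (a ^ Nat.gcd k m) 1 (m / Nat.gcd k m)
      rwa [one_pow, ← pow_mul, Nat.mul_div_cancel' (Nat.gcd_dvd_right k m)] at h

/-- In a finite cyclic group, `x` is an `e`-th power iff `x ^ (n / gcd e n) = 1`. -/
lemma aux_exists_pow_eq_iff {G : Type*} [Group G] [Fintype G] [IsCyclic G] (e : ℕ) (x : G) :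
    (∃ u : G, u ^ e = x) ↔ x ^ (Fintype.card G / Nat.gcd e (Fintype.card G)) = 1 := by
  set n := Fintype.card G with hn
  set d := Nat.gcd e n with hdd
  have hn0 : 0 < n := Fintype.card_pos
  have hdn : d ∣ n := Nat.gcd_dvd_right e n
  have hde : d ∣ e := Nat.gcd_dvd_left e n
  have hd0 : 0 < d := Nat.gcd_pos_of_pos_right _ hn0
  constructor
  · rintro ⟨u, rfl⟩
    have hmul : e * (n / d) = (e / d) * n := by
      obtain ⟨e', he'⟩ := hde
      obtain ⟨n', hn'⟩ := hdn
      rw [he', hn', Nat.mul_div_cancel_left _ hd0, Nat.mul_div_cancel_left _ hd0]; ring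
    rw [← pow_mul, hmul, mul_comm, pow_mul, pow_card_eq_one, one_pow]
  · intro hx
    obtain ⟨g, hg⟩ := IsCyclic.exists_generator (α := G)
    have horder : orderOf g = n := by
      rw [orderOf_eq_card_of_forall_mem_zpowers hg, Nat.card_eq_fintype_card]
    obtain ⟨c, hc⟩ : ∃ c : ℕ, g ^ c = x := by
      have := mem_powers_iff_mem_zpowers.mpr (hg x)
      exact (Submonoid.mem_powers_iff _ _).mp this
    have hdvd : n ∣ c * (n / d) := by
      have h0 : g ^ (c * (n / d)) = 1 := by rw [pow_mul, hc]; exact hx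
      have := orderOf_dvd_of_pow_eq_one h0
      rwa [horder] at this
    have hnd0 : 0 < n / d := Nat.div_pos (Nat.le_of_dvd hn0 hdn) hd0
    have hdc : d ∣ c := by
      have h1 : d * (n / d) ∣ c * (n / d) := by rwa [Nat.mul_div_cancel' hdn]
      exact (Nat.mul_dvd_mul_iff_right hnd0).mp h1
    obtain ⟨s, hs⟩ := hdc
    refine ⟨g ^ (Nat.gcdA e n * (s : ℤ)), ?_⟩
    have hbez : (d : ℤ) = e * Nat.gcdA e n + n * Nat.gcdB e n := Nat.gcd_eq_gcd_ab e n
    rw [← hc, ← zpow_natCast (g ^ (Nat.gcdA e n * (s:ℤ))) e, ← zpow_mul,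
      ← zpow_natCast g c, zpow_eq_zpow_iff_modEq, horder]
    rw [Int.modEq_iff_dvd]
    refine ⟨Nat.gcdB e n * s, ?_⟩
    have : (c : ℤ) = d * s := by exact_mod_cast hs
    rw [this, hbez]; ring

/-- Geometric sum formula for the quotient. -/
lemma aux_geom_div (a t : ℕ) (ha : 2 ≤ a) :
    (a ^ t - 1) / (a - 1) = ∑ i ∈ Finset.range t, a ^ i := by
  have key : (a - 1) * ∑ i ∈ Finset.range t, a ^ i = a ^ t - 1 := by
    have h1 : 1 ≤ a ^ t := Nat.one_le_pow _ _ (by omega)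
    have := geom_sum_mul (a : ℤ) t
    have hcast : ((a - 1 : ℕ) : ℤ) * ((∑ i ∈ Finset.range t, a ^ i : ℕ) : ℤ)
        = ((a ^ t - 1 : ℕ) : ℤ) := by
      push_cast [Nat.cast_sub (by omega : 1 ≤ a), Nat.cast_sub h1]
      linarith [geom_sum_mul (a : ℤ) t]
    exact_mod_cast hcast
  rw [← key, Nat.mul_div_cancel_left _ (by omega : 0 < a - 1)]

lemma aux_odd_geom_sum (a t : ℕ) (ha : Odd a) :
    (Odd (∑ i ∈ Finset.range t, a ^ i) ↔ Odd t) := by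
  have : (∑ i ∈ Finset.range t, a ^ i) % 2 = t % 2 := by
    rw [Finset.sum_nat_mod]
    have : ∀ i ∈ Finset.range t, a ^ i % 2 = 1 := fun i _ => Nat.odd_iff.mp (ha.pow)
    rw [Finset.sum_congr rfl this]
    simp
  rw [Nat.odd_iff, Nat.odd_iff, this]

/-- For `p` an odd prime and `k, m ≥ 1`, the monomial `x ↦ x^{p^k+1}` is planar on
`F_{p^m}` if and only if `m / gcd(k,m)` is odd. -/
theorem monomial_planar_iff_odd_quotient {F : Type*} [Field F] [Fintype F] (p k m : ℕ)
    (hp : p.Prime) (hodd : Odd p) [CharP F p] (hk : 0 < k) (hm : 0 < m)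
    (hF : Fintype.card F = p ^ m) :
    (∀ a : F, a ≠ 0 →
        Function.Bijective (fun x : F => (x + a) ^ (p ^ k + 1) - x ^ (p ^ k + 1))) ↔
      Odd (m / Nat.gcd k m) := by
  haveI : Fact p.Prime := ⟨hp⟩
  classical
  have hp3 : 3 ≤ p := by
    have h2 : p ≠ 2 := by rintro rfl; simp [Nat.odd_iff] at hodd
    have := hp.two_le; omega
  haveI : Fact (2 < p) := ⟨by omega⟩
  set q := p ^ k with hq
  have hq2 : 2 ≤ q := le_trans hp.two_le (Nat.le_self_pow hk.ne' p)
  set e := q - 1 with he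
  have heq : e + 1 = q := by omega
  -- expansion of the difference map
  have hD : ∀ a x : F, (x + a) ^ (q + 1) - x ^ (q + 1)
      = a * x ^ q + a ^ q * x + a ^ (q + 1) := by
    intro a x
    rw [pow_succ (x + a), hq, add_pow_char_pow, ← hq, pow_succ x]
    ring
  -- Step A: planarity ↔ no nonzero y with y^e = -1
  have stepA : (∀ a : F, a ≠ 0 →
      Function.Bijective (fun x : F => (x + a) ^ (q + 1) - x ^ (q + 1)))
        ↔ ∀ y : F, y ≠ 0 → y ^ e ≠ -1 := by
    constructor
    · intro H y hy hye
      have hyq : y ^ q = -y := by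
        rw [← heq, pow_succ, hye]; ring
      have hq0 : q ≠ 0 := fun h => by simp [h] at hq2
      have h1 := (H 1 one_ne_zero).injective
      have : y = 0 := by
        have hfy : (y + 1) ^ (q + 1) - y ^ (q + 1) = ((0:F) + 1) ^ (q + 1) - (0:F) ^ (q + 1) := by
          rw [hD, hD, hyq, zero_pow hq0]
          ring
        exact h1 hfy
      exact hy this
    · intro H a ha
      rw [← Finite.injective_iff_bijective]
      intro x1 x2 hx
      simp only [hD] at hx
      have hz : a * (x1 - x2) ^ q + a ^ q * (x1 - x2) = 0 := by
        rw [hq, sub_pow_char_pow, ← hq]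
        have := sub_eq_zero_of_eq hx
        ring_nf at this ⊢
        linear_combination this
      by_contra hne
      have hzne : x1 - x2 ≠ 0 := sub_ne_zero_of_ne fun h => hne h
      -- derive ((x1-x2)/a)^e = -1
      have hfac : (a * (x1 - x2)) * ((x1 - x2) ^ e + a ^ e) = 0 := by
        have h1 : (x1 - x2) ^ q = (x1 - x2) ^ e * (x1 - x2) := by rw [← pow_succ, heq]
        have h2 : a ^ q = a ^ e * a := by rw [← pow_succ, heq]
        rw [h1, h2] at hz
        linear_combination hz
      have hsum : (x1 - x2) ^ e + a ^ e = 0 := by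
        rcases mul_eq_zero.mp hfac with h | h
        · exact absurd h (mul_ne_zero ha hzne)
        · exact h
      have hye : ((x1 - x2) / a) ^ e = -1 := by
        rw [div_pow, div_eq_iff (pow_ne_zero e ha)]
        linear_combination hsum
      exact H _ (div_ne_zero hzne ha) hye
  rw [stepA]
  -- Step B: counting in the cyclic group Fˣ
  set n := p ^ m - 1 with hn
  have hcardU : Fintype.card Fˣ = n := by
    rw [Fintype.card_units, hF]
  have hpm2 : 2 ≤ p ^ m := le_trans hp.two_le (Nat.le_self_pow hm.ne' p)
  have hnodd : Odd (p ^ m) := hodd.pow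
  have hneven : 2 ∣ n := by
    rcases hnodd with ⟨j, hj⟩; omega
  set g := Nat.gcd k m with hg
  have hg0 : 0 < g := Nat.gcd_pos_of_pos_left m hk
  have hgm : g ∣ m := Nat.gcd_dvd_right k m
  set t := m / g with ht
  have hmgt : m = g * t := (Nat.mul_div_cancel' hgm).symm
  have hd : Nat.gcd e n = p ^ g - 1 := by
    rw [he, hn, hq]
    exact aux_gcd_pow_sub_one p hp.two_le k m hk hm
  have hpg2 : 2 ≤ p ^ g := le_trans hp.two_le (Nat.le_self_pow hg0.ne' p)
  -- the quotient n / gcd e n equals the geometric sum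
  have hquot : n / Nat.gcd e n = ∑ i ∈ Finset.range t, (p ^ g) ^ i := by
    rw [hd, hn, hmgt, pow_mul]
    exact aux_geom_div (p ^ g) t hpg2
  have hoddquot : Odd (n / Nat.gcd e n) ↔ Odd t := by
    rw [hquot]
    exact aux_odd_geom_sum _ t hodd.pow
  -- existence of y with y^e = -1
  have hne1 : (-1 : Fˣ) ≠ 1 := by
    intro h
    have hval : (-1 : F) = 1 := by
      have := congrArg (Units.val) h
      simpa using this
    exact CharP.neg_one_ne_one F p hval
  have hexists : (∃ y : F, y ≠ 0 ∧ y ^ e = -1) ↔ Even (n / Nat.gcd e n) := by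
    have h1 : (∃ y : F, y ≠ 0 ∧ y ^ e = -1) ↔ ∃ u : Fˣ, u ^ e = -1 := by
      constructor
      · rintro ⟨y, hy, hye⟩
        refine ⟨Units.mk0 y hy, ?_⟩
        ext
        push_cast
        simpa using hye
      · rintro ⟨u, hu⟩
        refine ⟨(u : F), u.ne_zero, ?_⟩
        have := congrArg (Units.val) hu
        push_cast at this
        simpa using this
    rw [h1, aux_exists_pow_eq_iff e (-1 : Fˣ), hcardU]
    rw [neg_one_pow_eq_one_iff_even hne1]
  constructor
  · intro H
    rw [← hoddquot, ← Nat.not_even_iff_odd]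
    intro heven
    obtain ⟨y, hy, hye⟩ := hexists.mpr heven
    exact H y hy hye
  · intro Ht y hy hye
    have : Even (n / Nat.gcd e n) := hexists.mp ⟨y, hy, hye⟩
    rw [← hoddquot, ← Nat.not_even_iff_odd] at Ht
    exact Ht this
end

section
/- Let B be a symmetric bilinear form on F_2^m, and define on G = F_2^m × F_2 the operation (x,y) ∗ (x',y') = (x+x', y+y'+B(x,x')). Then (G, ∗) is an abelian group. It is isomorphic to Z_2^{m+1} if B is alternating (B(x,x) = 0 for all x), and isomorphic to Z_4 × Z_2^{m-1} if B is nonalternating. -/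
open Finset in
lemma exists_quadratic_refinement {n : ℕ}
    (C : (Fin n → ZMod 2) → (Fin n → ZMod 2) → ZMod 2)
    (hsym : ∀ x y, C x y = C y x)
    (h1 : ∀ x y z, C (x + y) z = C x z + C y z)
    (h2 : ∀ x y z, C x (y + z) = C x y + C x z)
    (halt : ∀ x, C x x = 0) :
    ∃ Q : (Fin n → ZMod 2) → ZMod 2, ∀ x y, Q (x + y) = Q x + Q y + C x y := by
  set e : Fin n → (Fin n → ZMod 2) := fun i => Pi.single i 1 with he
  have C0 : ∀ y, C 0 y = 0 := by
    intro y
    have := h1 0 0 y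
    simp at this
    linear_combination this
  have C0' : ∀ x, C x 0 = 0 := by
    intro x; rw [hsym]; exact C0 x
  have Csmul : ∀ (c : ZMod 2) (x y : Fin n → ZMod 2), C (c • x) y = c * C x y := by
    intro c x y
    fin_cases c
    · show C ((0 : ZMod 2) • x) y = 0 * C x y; simp [C0]
    · show C ((1 : ZMod 2) • x) y = 1 * C x y; simp
  have Csmul' : ∀ (c : ZMod 2) (x y : Fin n → ZMod 2), C x (c • y) = c * C x y := by
    intro c x y; rw [hsym, Csmul, hsym]
  have Csum : ∀ (f : Fin n → (Fin n → ZMod 2)) (y : Fin n → ZMod 2),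
      C (∑ i, f i) y = ∑ i, C (f i) y := by
    intro f y
    exact map_sum (AddMonoidHom.mk' (fun x => C x y) (fun a b => h1 a b y)) f univ
  have Csum' : ∀ (x : Fin n → ZMod 2) (f : Fin n → (Fin n → ZMod 2)),
      C x (∑ i, f i) = ∑ i, C x (f i) := by
    intro x f
    exact map_sum (AddMonoidHom.mk' (fun y => C x y) (fun a b => h2 x a b)) f univ
  have hexp : ∀ x y : Fin n → ZMod 2,
      C x y = ∑ p ∈ (univ : Finset (Fin n × Fin n)), x p.1 * y p.2 * C (e p.1) (e p.2) := by
    intro x y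
    have hx : x = ∑ i, (x i) • e i := by
      funext j
      simp [he, Pi.single_apply]
    conv_lhs => rw [hx]
    rw [Csum]
    rw [← Finset.univ_product_univ, Finset.sum_product]
    refine Finset.sum_congr rfl fun i _ => ?_
    rw [Csmul]
    have hy : y = ∑ j, (y j) • e j := by
      funext j; simp [he, Pi.single_apply]
    conv_lhs => rw [hy, Csum']
    rw [Finset.mul_sum]
    refine Finset.sum_congr rfl fun j _ => ?_
    rw [Csmul']
    ring
  set L : Finset (Fin n × Fin n) := univ.filter (fun p => p.1 < p.2) with hL
  have hA : ∀ x y : Fin n → ZMod 2,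
      C x y = ∑ p ∈ L, (x p.1 * y p.2 + x p.2 * y p.1) * C (e p.1) (e p.2) := by
    intro x y
    rw [hexp x y]
    rw [← Finset.sum_filter_add_sum_filter_not univ (fun p : Fin n × Fin n => p.1 < p.2)]
    rw [← Finset.sum_filter_add_sum_filter_not
      (univ.filter (fun p : Fin n × Fin n => ¬ p.1 < p.2)) (fun p => p.2 < p.1)]
    have hdiag : ∑ p ∈ ((univ.filter (fun p : Fin n × Fin n => ¬ p.1 < p.2)).filter
        (fun p => ¬ p.2 < p.1)), x p.1 * y p.2 * C (e p.1) (e p.2) = 0 := by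
      refine Finset.sum_eq_zero fun p hp => ?_
      simp only [Finset.mem_filter] at hp
      have : p.1 = p.2 := le_antisymm (not_lt.mp hp.2) (not_lt.mp hp.1.2)
      rw [this, halt, mul_zero]
    rw [hdiag, add_zero]
    have hswap : ∑ p ∈ ((univ.filter (fun p : Fin n × Fin n => ¬ p.1 < p.2)).filter
        (fun p => p.2 < p.1)), x p.1 * y p.2 * C (e p.1) (e p.2)
        = ∑ p ∈ L, x p.2 * y p.1 * C (e p.1) (e p.2) := by
      refine Finset.sum_nbij' (fun p => Prod.swap p) (fun p => Prod.swap p) ?_ ?_ ?_ ?_ ?_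
      · intro p hp
        simp only [Finset.mem_filter, Finset.mem_univ, true_and, hL] at hp ⊢
        exact hp.2
      · intro p hp
        simp only [Finset.mem_filter, Finset.mem_univ, true_and, hL] at hp ⊢
        exact ⟨not_lt.mpr hp.le, hp⟩
      · intro p _; exact Prod.swap_swap p
      · intro p _; exact Prod.swap_swap p
      · intro p hp
        simp only [Prod.fst_swap, Prod.snd_swap]
        rw [hsym (e p.2) (e p.1)]
    rw [hswap, ← Finset.sum_add_distrib]
    refine Finset.sum_congr rfl fun p _ => ?_
    ring
  refine ⟨fun x => ∑ p ∈ L, x p.1 * x p.2 * C (e p.1) (e p.2), fun x y => ?_⟩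
  rw [hA x y, ← Finset.sum_add_distrib, ← Finset.sum_add_distrib]
  refine Finset.sum_congr rfl fun p _ => ?_
  simp only [Pi.add_apply]
  ring

/-- Let `B` be a symmetric bilinear form on `F_2^m` and define on `G = F_2^m × F_2` the
operation `(x,y) ∗ (x',y') = (x+x', y+y'+B(x,x'))`. Then `(G, ∗)` is an abelian group,
isomorphic to `Z_2^{m+1}` if `B` is alternating and to `Z_4 × Z_2^{m-1}` otherwise. -/
theorem bilinear_extension_group_structure (m : ℕ)
    (B : (Fin m → ZMod 2) → (Fin m → ZMod 2) → ZMod 2)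
    (hsym : ∀ x y, B x y = B y x)
    (hadd₁ : ∀ x y z, B (x + y) z = B x z + B y z)
    (hadd₂ : ∀ x y z, B x (y + z) = B x y + B x z) :
    let star : (Fin m → ZMod 2) × ZMod 2 → (Fin m → ZMod 2) × ZMod 2 →
        (Fin m → ZMod 2) × ZMod 2 :=
      fun p q => (p.1 + q.1, p.2 + q.2 + B p.1 q.1)
    (∀ p q, star p q = star q p) ∧
    (∀ p q r, star (star p q) r = star p (star q r)) ∧
    (∀ p, star (0, 0) p = p) ∧
    (∀ p, star p (-p.1, -p.2 + B p.1 p.1) = (0, 0)) ∧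
    ((∀ x, B x x = 0) →
      ∃ e : ((Fin m → ZMod 2) × ZMod 2) ≃ (Fin (m + 1) → ZMod 2),
        ∀ p q, e (star p q) = e p + e q) ∧
    (¬ (∀ x, B x x = 0) →
      ∃ e : ((Fin m → ZMod 2) × ZMod 2) ≃ (ZMod 4 × (Fin (m - 1) → ZMod 2)),
        ∀ p q, e (star p q) = e p + e q) := by
  intro star
  have B0 : ∀ y, B 0 y = 0 := by
    intro y
    have := hadd₁ 0 0 y
    simp at this
    linear_combination this
  have B0' : ∀ x, B x 0 = 0 := fun x => by rw [hsym]; exact B0 x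
  have Bsmul₁ : ∀ (c : ZMod 2) x y, B (c • x) y = c * B x y := by
    intro c x y
    fin_cases c
    · show B ((0 : ZMod 2) • x) y = 0 * B x y; simp [B0]
    · show B ((1 : ZMod 2) • x) y = 1 * B x y; simp
  have Bsmul₂ : ∀ (c : ZMod 2) x y, B x (c • y) = c * B x y := by
    intro c x y; rw [hsym, Bsmul₁, hsym]
  have hBadd : ∀ x y, B (x + y) (x + y) = B x x + B y y := by
    intro x y
    rw [hadd₁, hadd₂, hadd₂, hsym y x]
    have : B x y + B x y = 0 := CharTwo.add_self_eq_zero _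
    linear_combination this
  have hBsmul : ∀ (c : ZMod 2) x, B (c • x) (c • x) = c * B x x := by
    intro c x; rw [Bsmul₁, Bsmul₂, ← mul_assoc]
    fin_cases c
    · show (0 : ZMod 2) * 0 * B x x = 0 * B x x; simp
    · show (1 : ZMod 2) * 1 * B x x = 1 * B x x; simp
  refine ⟨?_, ?_, ?_, ?_, ?_, ?_⟩
  · -- commutativity
    intro p q
    simp only [star, Prod.mk.injEq]
    exact ⟨add_comm _ _, by rw [hsym p.1 q.1]; ring⟩
  · -- associativity
    intro p q r
    simp only [star, Prod.mk.injEq, hadd₁, hadd₂]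
    exact ⟨add_assoc _ _ _, by ring⟩
  · -- identity
    intro p
    simp only [star, B0, zero_add, add_zero]
  · -- inverse
    intro p
    have hneg : -p.1 = p.1 := funext fun i => CharTwo.neg_eq _
    simp only [star, hneg, Prod.mk.injEq]
    constructor
    · funext i; exact CharTwo.add_self_eq_zero _
    · have : p.2 + (-p.2 + B p.1 p.1) + B p.1 p.1
          = (p.2 + -p.2) + (B p.1 p.1 + B p.1 p.1) := by ring
      rw [this, add_neg_cancel, CharTwo.add_self_eq_zero, add_zero]
  · -- alternating case
    intro halt
    obtain ⟨Q, hQ⟩ := exists_quadratic_refinement B hsym hadd₁ hadd₂ halt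
    set ψ : (Fin (m + 1) → ZMod 2) → ((Fin m → ZMod 2) × ZMod 2) :=
      fun w => (Fin.init w, w (Fin.last m) + Q (Fin.init w)) with hψ
    have hinit : ∀ w w' : Fin (m + 1) → ZMod 2, Fin.init (w + w') = Fin.init w + Fin.init w' := by
      intro w w'; funext i; simp [Fin.init]
    have hom : ∀ w w', ψ (w + w') = star (ψ w) (ψ w') := by
      intro w w'
      simp only [hψ, star, hinit, Prod.mk.injEq, hQ, Pi.add_apply]
      exact ⟨trivial, by ring⟩
    have hinj : Function.Injective ψ := by
      intro w w' h
      simp only [hψ, Prod.mk.injEq] at h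
      have h1 := h.1
      have h2 : w (Fin.last m) = w' (Fin.last m) := by
        have := h.2
        rw [h1] at this
        exact add_right_cancel this
      funext i
      induction i using Fin.lastCases with
      | last => exact h2
      | cast i => exact congrFun h1 i
    have hcard : Fintype.card (Fin (m + 1) → ZMod 2)
        = Fintype.card ((Fin m → ZMod 2) × ZMod 2) := by
      simp [Fintype.card_fun, pow_succ]
    have hbij : Function.Bijective ψ :=
      (Fintype.bijective_iff_injective_and_card ψ).mpr ⟨hinj, hcard⟩
    set E := Equiv.ofBijective ψ hbij with hE
    refine ⟨E.symm, fun p q => ?_⟩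
    have hp : ψ (E.symm p) = p := E.apply_symm_apply p
    have hq : ψ (E.symm q) = q := E.apply_symm_apply q
    calc E.symm (star p q) = E.symm (star (ψ (E.symm p)) (ψ (E.symm q))) := by rw [hp, hq]
      _ = E.symm (ψ (E.symm p + E.symm q)) := by rw [hom]
      _ = E.symm p + E.symm q := E.symm_apply_apply _
  · -- nonalternating case
    intro hnonalt
    have hm : 1 ≤ m := by
      by_contra h
      push_neg at h
      interval_cases m
      exact hnonalt fun x => by
        have hx : x = 0 := funext fun i => i.elim0
        rw [hx]; exact B0 0
    push_neg at hnonalt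
    obtain ⟨a, ha0⟩ := hnonalt
    have ha : B a a = 1 := by
      have : ∀ c : ZMod 2, c ≠ 0 → c = 1 := by decide
      exact this _ ha0
    -- the linear form x ↦ B x x
    set φℓ : (Fin m → ZMod 2) →ₗ[ZMod 2] ZMod 2 :=
      { toFun := fun x => B x x
        map_add' := hBadd
        map_smul' := fun c x => by simpa using hBsmul c x } with hφℓ
    have hsurj : Function.Surjective φℓ := by
      intro c
      exact ⟨c • a, by simp [hφℓ, hBsmul, ha]⟩
    have hkerrank : Module.finrank (ZMod 2) (LinearMap.ker φℓ) = m - 1 := by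
      have h1 := LinearMap.finrank_range_add_finrank_ker φℓ
      rw [LinearMap.range_eq_top.mpr hsurj, finrank_top, Module.finrank_self,
        Module.finrank_pi] at h1
      simp at h1
      omega
    set b : Module.Basis (Fin (m - 1)) (ZMod 2) (LinearMap.ker φℓ) :=
      Module.finBasisOfFinrankEq (ZMod 2) (LinearMap.ker φℓ) hkerrank with hb
    set S : (Fin (m - 1) → ZMod 2) → (Fin m → ZMod 2) :=
      fun v => ((b.equivFun.symm v : LinearMap.ker φℓ) : Fin m → ZMod 2) with hS
    have Sadd : ∀ v w, S (v + w) = S v + S w := by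
      intro v w; simp only [hS, map_add, Submodule.coe_add]
    have Sinj : Function.Injective S := by
      intro v w h
      exact b.equivFun.symm.injective (Subtype.val_injective h)
    have SK : ∀ v, B (S v) (S v) = 0 := by
      intro v
      exact LinearMap.mem_ker.mp (b.equivFun.symm v).2
    obtain ⟨Q, hQ⟩ := exists_quadratic_refinement (fun v w => B (S v) (S w))
      (fun v w => hsym _ _) (fun v w z => by simp only [Sadd, hadd₁])
      (fun v w z => by simp only [Sadd, hadd₂]) SK
    set ε : ZMod 4 → ZMod 2 := fun k => (k.val : ZMod 2) with hε0
    set g : ZMod 4 → ZMod 2 := fun k => ((k.val / 2 : ℕ) : ZMod 2) with hg0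
    have hε : ∀ k l, ε (k + l) = ε k + ε l := by decide
    have hg : ∀ k l, g (k + l) = g k + g l + ε k * ε l := by decide
    have hεg : ∀ k l, ε k = ε l → g k = g l → k = l := by decide
    set ψ : ZMod 4 × (Fin (m - 1) → ZMod 2) → ((Fin m → ZMod 2) × ZMod 2) :=
      fun u => (ε u.1 • a + S u.2, g u.1 + Q u.2 + ε u.1 * B a (S u.2)) with hψ
    have hom : ∀ u w, ψ (u + w) = star (ψ u) (ψ w) := by
      intro u w
      simp only [hψ, star, Prod.fst_add, Prod.snd_add, Prod.mk.injEq, hε, hg, hQ, Sadd]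
      constructor
      · rw [add_smul]; abel
      · simp only [hadd₁, hadd₂, Bsmul₁, Bsmul₂, ha, mul_one]
        rw [hsym (S u.2) a]
        ring
    have hinj : Function.Injective ψ := by
      intro u w h
      simp only [hψ, Prod.mk.injEq] at h
      have h1 := h.1
      have hφ1 : B (ε u.1 • a + S u.2) (ε u.1 • a + S u.2)
          = B (ε w.1 • a + S w.2) (ε w.1 • a + S w.2) := by rw [h1]
      rw [hBadd, hBadd, hBsmul, hBsmul, ha, SK, SK] at hφ1
      simp only [mul_one, add_zero] at hφ1
      have hSe : S u.2 = S w.2 := by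
        rw [hφ1] at h1
        exact add_left_cancel h1
      have hu2 : u.2 = w.2 := Sinj hSe
      have hgu : g u.1 = g w.1 := by
        have h2 := h.2
        rw [hφ1, hu2] at h2
        have := add_right_cancel (add_right_cancel h2)
        exact this
      have hu1 : u.1 = w.1 := hεg _ _ hφ1 hgu
      exact Prod.ext hu1 hu2
    obtain ⟨k, rfl⟩ : ∃ k, m = k + 1 := ⟨m - 1, (Nat.succ_pred_eq_of_pos hm).symm⟩
    have hcard : Fintype.card (ZMod 4 × (Fin (k + 1 - 1) → ZMod 2))
        = Fintype.card ((Fin (k + 1) → ZMod 2) × ZMod 2) := by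
      simp [Fintype.card_fun, pow_succ]
      ring
    have hbij : Function.Bijective ψ :=
      (Fintype.bijective_iff_injective_and_card ψ).mpr ⟨hinj, hcard⟩
    set E := Equiv.ofBijective ψ hbij with hE
    refine ⟨E.symm, fun p q => ?_⟩
    have hp : ψ (E.symm p) = p := E.apply_symm_apply p
    have hq : ψ (E.symm q) = q := E.apply_symm_apply q
    calc E.symm (star p q) = E.symm (star (ψ (E.symm p)) (ψ (E.symm q))) := by rw [hp, hq]
      _ = E.symm (ψ (E.symm p + E.symm q)) := by rw [hom]
      _ = E.symm p + E.symm q := E.symm_apply_apply _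
end

section
/- Let B be a symmetric bilinear form on F_2^m, and let G = F_2^m × F_2 with operation (x,y) ∗ (x',y') = (x+x', y+y'+B(x,x')). A subset R of G is a (2^m, 2, 2^m, 2^{m-1}) difference set relative to N = {0} × F_2 if and only if there is a function f : F_2^m → F_2 such that R = {(x, f(x)) : x ∈ F_2^m} and for every nonzero a ∈ F_2^m and every b ∈ F_2, the equation f(x+a) + f(x) + B(a,x) = b has exactly 2^{m-1} solutions x. -/
private lemma z2_add_self : ∀ y : ZMod 2, y + y = 0 := by decide
private lemma z2_neg : ∀ y : ZMod 2, -y = y := by decide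
private lemma z2_ne_add : ∀ a b : ZMod 2, a ≠ b → a + b = 1 := by decide

private lemma piv_add_self {m : ℕ} (v : Fin m → ZMod 2) : v + v = 0 :=
  funext fun i => z2_add_self (v i)

private lemma piv_neg {m : ℕ} (v : Fin m → ZMod 2) : -v = v :=
  funext fun i => z2_neg (v i)



open scoped Classical in
/-- With `G = F_2^m × F_2` and `(x,y) ∗ (x',y') = (x+x', y+y'+B(x,x'))` for a symmetric
bilinear form `B`, a subset `R ⊆ G` is a `(2^m, 2, 2^m, 2^{m-1})` difference set relative
to `N = {0} × F_2` if and only if `R = {(x, f x)}` for some `f : F_2^m → F_2` such that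
`f(x+a)+f(x)+B(a,x) = b` has exactly `2^{m-1}` solutions for all `b` and nonzero `a`. -/
theorem rds_in_bilinear_extension_iff (m : ℕ)
    (B : (Fin m → ZMod 2) → (Fin m → ZMod 2) → ZMod 2)
    (hsym : ∀ x y, B x y = B y x)
    (hadd₁ : ∀ x y z, B (x + y) z = B x z + B y z)
    (hadd₂ : ∀ x y z, B x (y + z) = B x y + B x z)
    (R : Finset ((Fin m → ZMod 2) × ZMod 2)) :
    let star : (Fin m → ZMod 2) × ZMod 2 → (Fin m → ZMod 2) × ZMod 2 →
        (Fin m → ZMod 2) × ZMod 2 :=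
      fun p q => (p.1 + q.1, p.2 + q.2 + B p.1 q.1)
    let inv : (Fin m → ZMod 2) × ZMod 2 → (Fin m → ZMod 2) × ZMod 2 :=
      fun p => (-p.1, -p.2 + B p.1 p.1)
    (R.card = 2 ^ m ∧
      (∀ g : (Fin m → ZMod 2) × ZMod 2, g.1 ≠ 0 →
        ((R ×ˢ R).filter (fun pr => star pr.1 (inv pr.2) = g)).card = 2 ^ (m - 1)) ∧
      ((R ×ˢ R).filter
        (fun pr => star pr.1 (inv pr.2) = ((0 : Fin m → ZMod 2), (1 : ZMod 2)))).card
          = 0) ↔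
    ∃ f : (Fin m → ZMod 2) → ZMod 2,
      (R : Set ((Fin m → ZMod 2) × ZMod 2)) = {p | p.2 = f p.1} ∧
      ∀ a : Fin m → ZMod 2, a ≠ 0 → ∀ b : ZMod 2,
        (Finset.univ.filter
          (fun x : Fin m → ZMod 2 => f (x + a) + f x + B a x = b)).card
            = 2 ^ (m - 1) := by
  intro star inv
  -- `star p (inv q)` simplified
  have key : ∀ p q : (Fin m → ZMod 2) × ZMod 2,
      star p (inv q) = (p.1 + q.1, p.2 + q.2 + B q.1 q.1 + B p.1 q.1) := by
    intro p q
    show (p.1 + -q.1, p.2 + (-q.2 + B q.1 q.1) + B p.1 (-q.1))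
        = (p.1 + q.1, p.2 + q.2 + B q.1 q.1 + B p.1 q.1)
    rw [piv_neg, z2_neg]
    exact Prod.ext rfl (by ring)
  -- the key counting bijection, valid once R is the graph of f
  have count_eq : ∀ f : (Fin m → ZMod 2) → ZMod 2,
      (R : Set ((Fin m → ZMod 2) × ZMod 2)) = {p | p.2 = f p.1} →
      ∀ (a : Fin m → ZMod 2) (b : ZMod 2),
      ((R ×ˢ R).filter (fun pr => star pr.1 (inv pr.2) = (a, b))).card
        = (Finset.univ.filter
            (fun x : Fin m → ZMod 2 => f (x + a) + f x + B a x = b)).card := by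
    intro f hf a b
    have hmemR : ∀ p : (Fin m → ZMod 2) × ZMod 2, p ∈ R ↔ p.2 = f p.1 := by
      intro p
      rw [← Finset.mem_coe, hf]; rfl
    have him : (R ×ˢ R).filter (fun pr => star pr.1 (inv pr.2) = (a, b))
        = (Finset.univ.filter
            (fun x : Fin m → ZMod 2 => f (x + a) + f x + B a x = b)).image
            (fun x => ((x + a, f (x + a)), (x, f x))) := by
      ext pr
      simp only [Finset.mem_filter, Finset.mem_product, Finset.mem_image,
        Finset.mem_univ, true_and, key, Prod.mk.injEq]
      constructor
      · rintro ⟨⟨hp, hq⟩, h1, h2⟩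
        have hx : pr.1.1 = pr.2.1 + a := by
          rw [← h1, add_comm pr.1.1 pr.2.1, ← add_assoc, piv_add_self, zero_add]
        have e1 : pr.1.2 = f pr.1.1 := (hmemR _).1 hp
        have e2 : pr.2.2 = f pr.2.1 := (hmemR _).1 hq
        refine ⟨pr.2.1, ?_, ?_⟩
        · rw [e1, e2, hx] at h2
          rw [add_assoc, hadd₁ pr.2.1 a pr.2.1, ← add_assoc (B pr.2.1 pr.2.1),
            z2_add_self, zero_add] at h2
          exact h2
        · refine Prod.ext (Prod.ext ?_ ?_) (Prod.ext ?_ ?_)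
          · exact hx.symm
          · show f (pr.2.1 + a) = pr.1.2
            rw [e1, hx]
          · rfl
          · exact e2.symm
      · rintro ⟨x, hx, rfl⟩
        refine ⟨⟨(hmemR _).2 rfl, (hmemR _).2 rfl⟩, ?_, ?_⟩
        · show x + a + x = a
          rw [add_assoc x a x, add_comm a x, ← add_assoc, piv_add_self, zero_add]
        · show f (x + a) + f x + B x x + B (x + a) x = b
          rw [add_assoc, hadd₁ x a x, ← add_assoc (B x x), z2_add_self, zero_add]
          exact hx
    rw [him]
    apply Finset.card_image_of_injOn
    intro x _ y _ h
    exact congrArg (fun pr => pr.2.1) h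
  constructor
  · rintro ⟨hcard, hdiff, hN⟩
    -- fst is injective on R
    have hinj : ∀ p ∈ R, ∀ q ∈ R, p.1 = q.1 → p = q := by
      intro p hp q hq h1
      by_contra hne
      have h2 : p.2 ≠ q.2 := fun h => hne (Prod.ext h1 h)
      have hmem : (p, q) ∈ (R ×ˢ R).filter
          (fun pr => star pr.1 (inv pr.2) = ((0 : Fin m → ZMod 2), (1 : ZMod 2))) := by
        refine Finset.mem_filter.2 ⟨Finset.mem_product.2 ⟨hp, hq⟩, ?_⟩
        rw [key]
        refine Prod.ext ?_ ?_
        · show p.1 + q.1 = 0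
          rw [h1, piv_add_self]
        · show p.2 + q.2 + B q.1 q.1 + B p.1 q.1 = 1
          rw [h1, add_assoc, z2_add_self, add_zero]
          exact z2_ne_add _ _ h2
      have := Finset.card_pos.2 ⟨(p, q), hmem⟩
      omega
    -- fst is surjective from R
    have hsurj : ∀ x : Fin m → ZMod 2, ∃ p ∈ R, p.1 = x := by
      intro x
      have hicard : (R.image Prod.fst).card = 2 ^ m := by
        rw [Finset.card_image_of_injOn (fun p hp q hq h => hinj p hp q hq h), hcard]
      have huniv : R.image Prod.fst = Finset.univ := by
        apply Finset.eq_univ_of_card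
        rw [hicard]
        simp [Fintype.card_fun]
      have : x ∈ R.image Prod.fst := huniv ▸ Finset.mem_univ x
      obtain ⟨p, hp, hpx⟩ := Finset.mem_image.1 this
      exact ⟨p, hp, hpx⟩
    set f : (Fin m → ZMod 2) → ZMod 2 := fun x => ((hsurj x).choose).2 with hfdef
    have hfmem : ∀ x, (x, f x) ∈ R := by
      intro x
      obtain ⟨hp, hpx⟩ := (hsurj x).choose_spec
      have : (hsurj x).choose = (x, f x) := Prod.ext hpx rfl
      rwa [this] at hp
    have hgraph : (R : Set ((Fin m → ZMod 2) × ZMod 2)) = {p | p.2 = f p.1} := by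
      ext p
      simp only [Finset.mem_coe, Set.mem_setOf_eq]
      constructor
      · intro hp
        exact (Prod.ext_iff.1 (hinj p hp (p.1, f p.1) (hfmem p.1) rfl)).2
      · intro hp
        have : p = (p.1, f p.1) := Prod.ext rfl hp
        rw [this]; exact hfmem p.1
    refine ⟨f, hgraph, ?_⟩
    intro a ha b
    rw [← count_eq f hgraph a b]
    exact hdiff (a, b) ha
  · rintro ⟨f, hgraph, hcount⟩
    have hmemR : ∀ p : (Fin m → ZMod 2) × ZMod 2, p ∈ R ↔ p.2 = f p.1 := by
      intro p
      rw [← Finset.mem_coe, hgraph]; rfl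
    have hRim : R = Finset.univ.image (fun x : Fin m → ZMod 2 => (x, f x)) := by
      apply Finset.coe_injective
      rw [hgraph, Finset.coe_image, Finset.coe_univ, Set.image_univ]
      ext p
      simp only [Set.mem_setOf_eq, Set.mem_range]
      constructor
      · intro hp; exact ⟨p.1, Prod.ext rfl hp.symm⟩
      · rintro ⟨x, rfl⟩; rfl
    refine ⟨?_, ?_, ?_⟩
    · rw [hRim, Finset.card_image_of_injective _ (fun x y h => congrArg Prod.fst h)]
      simp [Fintype.card_fun]
    · rintro ⟨a, b⟩ hg
      rw [count_eq f hgraph a b]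
      exact hcount a hg b
    · rw [count_eq f hgraph 0 1]
      apply Finset.card_eq_zero.2
      apply Finset.filter_eq_empty_iff.2
      intro x _
      have hB0 : B 0 x = 0 := by
        have h2 := hadd₁ 0 0 x
        rw [add_zero] at h2
        rwa [z2_add_self (B 0 x)] at h2
      rw [add_zero x, z2_add_self (f x), zero_add, hB0]
      decide
end

section
/- Let m be a positive integer and let f : F_2^m → F_2. Define γ : F_2^m × F_2 → ℂ by γ(x,y) = i^{w(x)} (−1)^y, where w(x) is the Hamming weight of x. Then γ is a group homomorphism from (G, ∗) to ℂ^×, where G = F_2^m × F_2 has operation (x,y) ∗ (x',y') = (x+x', y+y'+⟨x,x'⟩) and ⟨·,·⟩ is the standard dot product over F_2. -/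
private lemma chi_add (a b : ZMod 2) :
    (-1 : ℂ) ^ ((a + b).val) = (-1 : ℂ) ^ a.val * (-1 : ℂ) ^ b.val := by
  rcases (by decide : ∀ a : ZMod 2, a = 0 ∨ a = 1) a with rfl | rfl <;> rcases (by decide : ∀ a : ZMod 2, a = 0 ∨ a = 1) b with rfl | rfl <;>
    norm_num [show ((2:ZMod 2)).val = 0 from rfl, show ((1:ZMod 2)).val = 1 from rfl]

private lemma iota_add (a b : ZMod 2) :
    Complex.I ^ ((a + b).val)
      = Complex.I ^ a.val * Complex.I ^ b.val * (-1 : ℂ) ^ ((a * b).val) := by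
  rcases (by decide : ∀ a : ZMod 2, a = 0 ∨ a = 1) a with rfl | rfl <;> rcases (by decide : ∀ a : ZMod 2, a = 0 ∨ a = 1) b with rfl | rfl <;> norm_num [Complex.I_mul_I,
      show ((2:ZMod 2)).val = 0 from rfl, show ((1:ZMod 2)).val = 1 from rfl]

private lemma chi_sum {α : Type*} (s : Finset α) (f : α → ZMod 2) :
    (-1 : ℂ) ^ ((∑ i ∈ s, f i).val) = ∏ i ∈ s, (-1 : ℂ) ^ ((f i).val) := by
  induction s using Finset.cons_induction with
  | empty => simp
  | cons a s ha ih => rw [Finset.sum_cons, Finset.prod_cons, chi_add, ih]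

private lemma iota_sum {α : Type*} (s : Finset α) (f : α → ℕ) :
    Complex.I ^ (∑ i ∈ s, f i) = ∏ i ∈ s, Complex.I ^ (f i) := by
  induction s using Finset.cons_induction with
  | empty => simp
  | cons a s ha ih => rw [Finset.sum_cons, Finset.prod_cons, pow_add, ih]

private lemma weight_eq_sum (m : ℕ) (x : Fin m → ZMod 2) :
    (Finset.univ.filter (fun i => x i ≠ 0)).card = ∑ i, (x i).val := by
  rw [Finset.card_filter]
  refine Finset.sum_congr rfl fun i _ => ?_
  generalize x i = a
  rcases (by decide : ∀ a : ZMod 2, a = 0 ∨ a = 1) a with rfl | rfl <;> simp [show ((1:ZMod 2)).val = 1 from rfl]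

/-- The map `γ(x,y) = i^{w(x)} (−1)^y` is a group homomorphism from
`G = F_2^m × F_2` with operation `(x,y) ∗ (x',y') = (x+x', y+y'+⟨x,x'⟩)` to `ℂ^×`. -/
theorem gamma_is_homomorphism (m : ℕ) :
    let w : (Fin m → ZMod 2) → ℕ :=
      fun x => (Finset.univ.filter (fun i => x i ≠ 0)).card
    let γ : (Fin m → ZMod 2) × ZMod 2 → ℂ :=
      fun p => Complex.I ^ (w p.1) * (-1 : ℂ) ^ (p.2.val)
    ∀ p q : (Fin m → ZMod 2) × ZMod 2,
      γ (p.1 + q.1, p.2 + q.2 + ∑ i, p.1 i * q.1 i) = γ p * γ q := by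
  intro w γ p q
  show Complex.I ^ (w (p.1 + q.1)) *
      (-1 : ℂ) ^ ((p.2 + q.2 + ∑ i, p.1 i * q.1 i).val)
      = Complex.I ^ (w p.1) * (-1 : ℂ) ^ (p.2.val) *
        (Complex.I ^ (w q.1) * (-1 : ℂ) ^ (q.2.val))
  have hw : ∀ x : Fin m → ZMod 2, w x = ∑ i, (x i).val := fun x => weight_eq_sum m x
  rw [hw, hw, hw, iota_sum, iota_sum, iota_sum, chi_add, chi_add, chi_sum]
  have : ∀ i : Fin m, ((p.1 + q.1) i).val = (p.1 i).val + (q.1 i).val →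
    True := fun _ _ => trivial
  calc (∏ i, Complex.I ^ (((p.1 + q.1) i).val)) *
        ((-1 : ℂ) ^ (p.2.val) * (-1 : ℂ) ^ (q.2.val) *
          ∏ i, (-1 : ℂ) ^ ((p.1 i * q.1 i).val))
      = (∏ i, (Complex.I ^ ((p.1 i).val) * Complex.I ^ ((q.1 i).val) *
          (-1 : ℂ) ^ ((p.1 i * q.1 i).val))) *
        ((-1 : ℂ) ^ (p.2.val) * (-1 : ℂ) ^ (q.2.val) *
          ∏ i, (-1 : ℂ) ^ ((p.1 i * q.1 i).val)) := by
        congr 1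
        exact Finset.prod_congr rfl fun i _ => iota_add (p.1 i) (q.1 i)
    _ = _ := by
        simp only [Finset.prod_mul_distrib]
        have h2 : ∀ z : ℂ, z * z = z ^ 2 := fun z => (sq z).symm
        have hsq : (∏ i, (-1 : ℂ) ^ ((p.1 i * q.1 i).val)) *
            (∏ i, (-1 : ℂ) ^ ((p.1 i * q.1 i).val)) = 1 := by
          rw [← Finset.prod_mul_distrib]
          refine Finset.prod_eq_one fun i _ => ?_
          rw [← pow_add, ← two_mul, pow_mul]
          norm_num
        calc (∏ i, Complex.I ^ ((p.1 i).val)) * (∏ i, Complex.I ^ ((q.1 i).val)) *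
              (∏ i, (-1 : ℂ) ^ ((p.1 i * q.1 i).val)) *
              ((-1 : ℂ) ^ (p.2.val) * (-1 : ℂ) ^ (q.2.val) *
                ∏ i, (-1 : ℂ) ^ ((p.1 i * q.1 i).val))
            = (∏ i, Complex.I ^ ((p.1 i).val)) * (-1 : ℂ) ^ (p.2.val) *
              ((∏ i, Complex.I ^ ((q.1 i).val)) * (-1 : ℂ) ^ (q.2.val)) *
              ((∏ i, (-1 : ℂ) ^ ((p.1 i * q.1 i).val)) *
                (∏ i, (-1 : ℂ) ^ ((p.1 i * q.1 i).val))) := by ring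
          _ = _ := by rw [hsq]; ring
end

section
/- Let f : F_2^m → F_2 and let R = {(x, f(x)) : x ∈ F_2^m} ⊆ G, where G = F_2^m × F_2 has operation (x,y) ∗ (x',y') = (x+x', y+y'+⟨x,x'⟩). Then R is a (2^m, 2, 2^m, 2^{m-1}) difference set in G relative to N = {0} × F_2 if and only if for every a ∈ F_2^m, |Σ_{x ∈ F_2^m} (−1)^{⟨x,a⟩ + f(x)} i^{w(x)}|² = 2^m, i.e., f is negabent. -/
namespace RdsNB
variable {m : ℕ}
def Bl (x y : Fin m → ZMod 2) : ZMod 2 := ∑ i, x i * y i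
def wl (x : Fin m → ZMod 2) : ℕ := (Finset.univ.filter (fun i => x i ≠ 0)).card
noncomputable def χ (v : ZMod 2) : ℂ := (-1) ^ v.val
noncomputable def ee (x : Fin m → ZMod 2) : ℂ := Complex.I ^ wl x
def kk (x y : Fin m → ZMod 2) : ℕ :=
  (Finset.univ.filter (fun i => x i ≠ 0 ∧ y i ≠ 0)).card
lemma zmod2_cases (u : ZMod 2) : u = 0 ∨ u = 1 := by revert u; decide
lemma χ_zero : χ 0 = 1 := by simp [χ]
lemma val_one' : (1 : ZMod 2).val = 1 := rfl
lemma oneone : (1 + 1 : ZMod 2) = 0 := rfl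
lemma χ_one : χ 1 = -1 := by simp [χ, val_one']
lemma χ_add (u v : ZMod 2) : χ (u + v) = χ u * χ v := by
  rcases zmod2_cases u with h | h <;> rcases zmod2_cases v with h' | h' <;>
    subst h <;> subst h' <;> simp [χ, val_one', oneone]
lemma χ_natCast (n : ℕ) : χ (n : ZMod 2) = (-1) ^ n := by
  induction n with
  | zero => simp [χ]
  | succ k ih => push_cast; rw [χ_add, ih, χ_one]; ring
lemma χ_sq (u : ZMod 2) : χ u * χ u = 1 := by
  rw [← χ_add]
  rcases zmod2_cases u with h | h <;> subst h <;> simp [χ, val_one', oneone]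
lemma conj_χ (u : ZMod 2) : (starRingEnd ℂ) (χ u) = χ u := by simp [χ]
lemma Bl_add_left (x y z : Fin m → ZMod 2) : Bl (x + y) z = Bl x z + Bl y z := by
  simp [Bl, add_mul, Finset.sum_add_distrib]
lemma Bl_zero_left (y : Fin m → ZMod 2) : Bl 0 y = 0 := by simp [Bl]
lemma Bl_comm (x y : Fin m → ZMod 2) : Bl x y = Bl y x := by simp [Bl, mul_comm]
lemma add_self' (x : Fin m → ZMod 2) : x + x = 0 := by
  funext i; exact (by decide : ∀ u : ZMod 2, u + u = 0) (x i)
lemma add_self'' (u : ZMod 2) : u + u = 0 := (by decide : ∀ u : ZMod 2, u + u = 0) u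
lemma neg_eq' (x : Fin m → ZMod 2) : -x = x := by
  funext i; exact (by decide : ∀ u : ZMod 2, -u = u) (x i)
lemma neg_eq'' (u : ZMod 2) : -u = u := (by decide : ∀ u : ZMod 2, -u = u) u
lemma w_as_sum (x : Fin m → ZMod 2) :
    wl x = ∑ i, if x i ≠ 0 then 1 else 0 := by rw [wl, Finset.card_filter]
lemma kk_as_sum (x y : Fin m → ZMod 2) :
    kk x y = ∑ i, if x i ≠ 0 ∧ y i ≠ 0 then 1 else 0 := by rw [kk, Finset.card_filter]
lemma weight_add (x y : Fin m → ZMod 2) :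
    wl (x + y) + 2 * kk x y = wl x + wl y := by
  rw [w_as_sum, w_as_sum, w_as_sum, kk_as_sum, Finset.mul_sum,
    ← Finset.sum_add_distrib, ← Finset.sum_add_distrib]
  refine Finset.sum_congr rfl fun i _ => ?_
  have : ∀ u v : ZMod 2,
      ((if u + v ≠ 0 then 1 else 0) + 2 * (if u ≠ 0 ∧ v ≠ 0 then 1 else 0) : ℕ)
        = (if u ≠ 0 then 1 else 0) + (if v ≠ 0 then 1 else 0) := by decide
  exact this (x i) (y i)
lemma Bl_eq_kk (x y : Fin m → ZMod 2) : Bl x y = (kk x y : ZMod 2) := by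
  rw [Bl, kk_as_sum]
  push_cast [apply_ite (Nat.cast : ℕ → ZMod 2)]
  refine Finset.sum_congr rfl fun i _ => ?_
  exact (by decide : ∀ u v : ZMod 2, u * v = (if u ≠ 0 ∧ v ≠ 0 then 1 else 0 : ZMod 2))
    (x i) (y i)
lemma Bl_self (y : Fin m → ZMod 2) : Bl y y = (wl y : ZMod 2) := by
  rw [Bl_eq_kk, w_as_sum, kk_as_sum]
  congr 1
  exact Finset.sum_congr rfl fun i _ => by simp [and_self]
lemma w_zero : wl (0 : Fin m → ZMod 2) = 0 := by simp [wl]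
lemma ee_zero : ee (0 : Fin m → ZMod 2) = 1 := by simp [ee, w_zero]
lemma ee_ne_zero (x : Fin m → ZMod 2) : ee x ≠ 0 :=
  pow_ne_zero _ Complex.I_ne_zero
lemma ee_mul (x y : Fin m → ZMod 2) :
    ee x * ee y = ee (x + y) * χ (Bl x y) := by
  rw [ee, ee, ee, ← pow_add, ← weight_add x y, pow_add, pow_mul, Complex.I_sq,
    Bl_eq_kk, χ_natCast]
lemma conj_ee (y : Fin m → ZMod 2) :
    (starRingEnd ℂ) (ee y) = χ (Bl y y) * ee y := by
  rw [ee, map_pow, Complex.conj_I, Bl_self, χ_natCast, neg_pow]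
lemma Bl_single (d : Fin m → ZMod 2) (j : Fin m) :
    Bl d (Pi.single j 1) = d j := by
  simp [Bl, Pi.single_apply, mul_ite, Finset.sum_ite_eq]
lemma card_V : Fintype.card (Fin m → ZMod 2) = 2 ^ m := by simp
lemma char_sum {d : Fin m → ZMod 2} (hd : d ≠ 0) : ∑ a, χ (Bl d a) = 0 := by
  obtain ⟨j, hj⟩ : ∃ j, d j ≠ 0 := by
    by_contra h; push_neg at h; exact hd (funext h)
  have hdj : d j = 1 := (zmod2_cases (d j)).resolve_left hj
  have key : ∀ a, χ (Bl d (a + Pi.single j 1)) = - χ (Bl d a) := by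
    intro a
    have hB : Bl d (a + Pi.single j 1) = Bl d a + 1 := by
      rw [Bl_comm, Bl_add_left, Bl_comm a d, Bl_comm (Pi.single j 1) d, Bl_single, hdj]
    rw [hB, χ_add, χ_one]; ring
  have h2 : ∑ a, χ (Bl d (a + Pi.single j 1)) = ∑ a, χ (Bl d a) :=
    Fintype.sum_equiv (Equiv.addRight (Pi.single j 1)) _ _ (fun a => rfl)
  have h3 : ∑ a, χ (Bl d a) = - ∑ a, χ (Bl d a) := by
    nth_rewrite 1 [← h2]
    rw [← Finset.sum_neg_distrib]
    exact Finset.sum_congr rfl fun a _ => key a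
  have h4 : (2 : ℂ) * ∑ a, χ (Bl d a) = 0 := by linear_combination h3
  exact (mul_eq_zero.mp h4).resolve_left two_ne_zero
lemma char_sum_full (d : Fin m → ZMod 2) :
    ∑ a, χ (Bl d a) = if d = 0 then (2 ^ m : ℂ) else 0 := by
  split_ifs with h
  · subst h
    simp [Bl_zero_left, χ_zero, Finset.card_univ, card_V]
  · exact char_sum h

/-! ## T, cnt -/

noncomputable def T (f : (Fin m → ZMod 2) → ZMod 2) (d : Fin m → ZMod 2) : ℂ :=
  ∑ y, χ (f (y + d) + f y + Bl d y)

def cnt (f : (Fin m → ZMod 2) → ZMod 2) (d : Fin m → ZMod 2) (b : ZMod 2) : ℕ :=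
  (Finset.univ.filter (fun y => f (y + d) + f y + Bl d y = b)).card

lemma T_zero (f : (Fin m → ZMod 2) → ZMod 2) : T f 0 = (2 ^ m : ℂ) := by
  rw [T]
  have : ∀ y : Fin m → ZMod 2, χ (f (y + 0) + f y + Bl 0 y) = 1 := by
    intro y
    rw [add_zero, Bl_zero_left, add_zero, add_self'', χ_zero]
  simp only [this]
  simp [Finset.card_univ, card_V]

lemma T_eq_cnt (f : (Fin m → ZMod 2) → ZMod 2) (d : Fin m → ZMod 2) :
    T f d = (cnt f d 0 : ℂ) - (cnt f d 1 : ℂ) := by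
  rw [T, ← Finset.sum_filter_add_sum_filter_not Finset.univ
    (fun y => f (y + d) + f y + Bl d y = 0)]
  have h0 : ∑ y ∈ Finset.univ.filter (fun y => f (y + d) + f y + Bl d y = 0),
      χ (f (y + d) + f y + Bl d y) = (cnt f d 0 : ℂ) := by
    rw [Finset.sum_congr rfl (fun y hy => by
      rw [(Finset.mem_filter.mp hy).2, χ_zero]), Finset.sum_const, cnt]
    simp
  have h1 : ∑ y ∈ Finset.univ.filter (fun y => ¬ f (y + d) + f y + Bl d y = 0),
      χ (f (y + d) + f y + Bl d y) = -(cnt f d 1 : ℂ) := by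
    rw [Finset.sum_congr rfl (fun y hy => by
      have := (Finset.mem_filter.mp hy).2
      rw [(zmod2_cases _).resolve_left this, χ_one]), Finset.sum_const]
    have : Finset.univ.filter (fun y : Fin m → ZMod 2 => ¬ f (y + d) + f y + Bl d y = 0)
        = Finset.univ.filter (fun y => f (y + d) + f y + Bl d y = 1) := by
      refine Finset.filter_congr fun y _ => ?_
      rcases zmod2_cases (f (y + d) + f y + Bl d y) with h | h <;> simp [h]
    rw [this, cnt]
    simp
  rw [h0, h1]
  ring

lemma cnt_sum (f : (Fin m → ZMod 2) → ZMod 2) (d : Fin m → ZMod 2) :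
    cnt f d 0 + cnt f d 1 = 2 ^ m := by
  have hcompl : Finset.univ.filter
      (fun y : Fin m → ZMod 2 => ¬ f (y + d) + f y + Bl d y = 0)
      = Finset.univ.filter (fun y => f (y + d) + f y + Bl d y = 1) := by
    refine Finset.filter_congr fun y _ => ?_
    rcases zmod2_cases (f (y + d) + f y + Bl d y) with h | h <;> simp [h]
  rw [cnt, cnt, ← hcompl, Finset.card_filter_add_card_filter_not,
    Finset.card_univ, card_V]

lemma count_iff_T (f : (Fin m → ZMod 2) → ZMod 2) (d : Fin m → ZMod 2) (hd : d ≠ 0) :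
    (∀ b, cnt f d b = 2 ^ (m - 1)) ↔ T f d = 0 := by
  have hm : 1 ≤ m := by
    rcases Nat.eq_zero_or_pos m with h | h
    · subst h; exact absurd (funext fun i => i.elim0) hd
    · exact h
  have hpow : 2 ^ m = 2 * 2 ^ (m - 1) := by
    rw [← pow_succ']
    congr 1
    omega
  constructor
  · intro h
    rw [T_eq_cnt, h 0, h 1, sub_self]
  · intro h
    rw [T_eq_cnt, sub_eq_zero] at h
    have hc : cnt f d 0 = cnt f d 1 := Nat.cast_inj.mp h
    have hs := cnt_sum f d
    intro b
    rcases zmod2_cases b with hb | hb <;> subst hb <;> omega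

/-! ## key identity -/

lemma term_eq (f : (Fin m → ZMod 2) → ZMod 2) (a y d : Fin m → ZMod 2) :
    (χ (Bl (y + d) a + f (y + d)) * ee (y + d)) *
      (starRingEnd ℂ) (χ (Bl y a + f y) * ee y)
      = χ (Bl d a) * ee d * χ (f (y + d) + f y + Bl d y) := by
  have hyd : (y + d) + y = d := by
    rw [add_comm y d, add_assoc, add_self', add_zero]
  have h1 : ee (y + d) * ee y = ee d * (χ (Bl y y) * χ (Bl d y)) := by
    rw [ee_mul, hyd, Bl_add_left, χ_add]
  rw [map_mul, conj_χ, conj_ee]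
  simp only [Bl_add_left, χ_add]
  linear_combination
    (χ (Bl y a) * χ (Bl y a) * χ (Bl d a) * χ (f (y + d)) * χ (f y) * χ (Bl y y)) * h1
    + (χ (Bl d a) * χ (f (y + d)) * χ (f y) * χ (Bl y y) * χ (Bl y y) * χ (Bl d y) * ee d)
        * χ_sq (Bl y a)
    + (χ (Bl d a) * χ (f (y + d)) * χ (f y) * χ (Bl d y) * ee d) * χ_sq (Bl y y)

lemma key (f : (Fin m → ZMod 2) → ZMod 2) (a : Fin m → ZMod 2) :
    (∑ x, χ (Bl x a + f x) * ee x) *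
      (starRingEnd ℂ) (∑ x, χ (Bl x a + f x) * ee x)
      = ∑ d, χ (Bl d a) * ee d * T f d := by
  have hrhs : ∑ d, χ (Bl d a) * ee d * T f d
      = ∑ y, ∑ d, χ (Bl d a) * ee d * χ (f (y + d) + f y + Bl d y) := by
    simp only [T, Finset.mul_sum]
    exact Finset.sum_comm
  rw [map_sum, Finset.sum_mul_sum, hrhs]
  conv_lhs => rw [Finset.sum_comm]
  refine Finset.sum_congr rfl fun y _ => ?_
  calc ∑ x, (χ (Bl x a + f x) * ee x) * (starRingEnd ℂ) (χ (Bl y a + f y) * ee y)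
      = ∑ d, (χ (Bl (y + d) a + f (y + d)) * ee (y + d)) *
          (starRingEnd ℂ) (χ (Bl y a + f y) * ee y) :=
        (Fintype.sum_equiv (Equiv.addLeft y) _ _ (fun d => rfl)).symm
    _ = ∑ d, χ (Bl d a) * ee d * χ (f (y + d) + f y + Bl d y) :=
        Finset.sum_congr rfl fun d _ => term_eq f a y d

/-! ## engines -/

lemma forward_engine (f : (Fin m → ZMod 2) → ZMod 2) (a : Fin m → ZMod 2)
    (hT : ∀ d : Fin m → ZMod 2, d ≠ 0 → T f d = 0) :
    ∑ d, χ (Bl d a) * ee d * T f d = (2 ^ m : ℂ) := by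
  rw [Finset.sum_eq_single (0 : Fin m → ZMod 2)]
  · rw [Bl_zero_left, χ_zero, ee_zero, T_zero]; ring
  · intro d _ hd; rw [hT d hd, mul_zero]
  · intro h; exact absurd (Finset.mem_univ _) h

lemma backward_engine (f : (Fin m → ZMod 2) → ZMod 2)
    (H : ∀ a, ∑ d, χ (Bl d a) * ee d * T f d = (2 ^ m : ℂ))
    {d0 : Fin m → ZMod 2} (hd0 : d0 ≠ 0) : T f d0 = 0 := by
  have hX : ∑ a, χ (Bl d0 a) * ∑ d, χ (Bl d a) * ee d * T f d
      = ∑ a, χ (Bl d0 a) * (2 ^ m : ℂ) :=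
    Finset.sum_congr rfl fun a _ => by rw [H a]
  rw [← Finset.sum_mul, char_sum hd0, zero_mul] at hX
  have hY : ∑ a, χ (Bl d0 a) * ∑ d, χ (Bl d a) * ee d * T f d
      = (2 ^ m : ℂ) * (ee d0 * T f d0) := by
    calc ∑ a, χ (Bl d0 a) * ∑ d, χ (Bl d a) * ee d * T f d
        = ∑ a, ∑ d, χ (Bl (d0 + d) a) * (ee d * T f d) := by
          refine Finset.sum_congr rfl fun a _ => ?_
          rw [Finset.mul_sum]
          refine Finset.sum_congr rfl fun d _ => ?_
          rw [Bl_add_left, χ_add]; ring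
      _ = ∑ d, (∑ a, χ (Bl (d0 + d) a)) * (ee d * T f d) := by
          rw [Finset.sum_comm]
          exact Finset.sum_congr rfl fun d _ => (Finset.sum_mul _ _ _).symm
      _ = (2 ^ m : ℂ) * (ee d0 * T f d0) := by
          rw [Finset.sum_eq_single d0]
          · rw [char_sum_full, if_pos (add_self' d0)]
          · intro d _ hd
            rw [char_sum_full, if_neg, zero_mul]
            intro hc
            apply hd
            have : d0 + (d0 + d) = d0 + 0 := by rw [hc]
            rw [← add_assoc, add_self', zero_add, add_zero] at this
            exact this.symm ▸ rfl
          · intro h; exact absurd (Finset.mem_univ _) h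
  rw [hY] at hX
  have h2 : (2 : ℂ) ^ m ≠ 0 := pow_ne_zero _ two_ne_zero
  have h3 := (mul_eq_zero.mp hX).resolve_left h2
  exact (mul_eq_zero.mp h3).resolve_left (ee_ne_zero d0)


/-! ## combinatorial bridge -/

lemma mem_Rf (f : (Fin m → ZMod 2) → ZMod 2) (p : (Fin m → ZMod 2) × ZMod 2) :
    p ∈ Finset.univ.image (fun x : Fin m → ZMod 2 => (x, f x)) ↔ p.2 = f p.1 := by
  constructor
  · intro hp
    obtain ⟨x, -, hx⟩ := Finset.mem_image.mp hp
    rw [← hx]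
  · intro hp
    exact Finset.mem_image.mpr ⟨p.1, Finset.mem_univ _, by rw [← hp]⟩

lemma solve_add {a b c : Fin m → ZMod 2} (h : a + b = c) : a = c + b := by
  rw [← h, add_assoc, add_self', add_zero]

lemma card_pairs (f : (Fin m → ZMod 2) → ZMod 2) (g : (Fin m → ZMod 2) × ZMod 2) :
    (((Finset.univ.image (fun x : Fin m → ZMod 2 => (x, f x))) ×ˢ
        (Finset.univ.image (fun x : Fin m → ZMod 2 => (x, f x)))).filter
      (fun pr => (pr.1.1 + -pr.2.1,
          pr.1.2 + (-pr.2.2 + Bl pr.2.1 pr.2.1) + Bl pr.1.1 (-pr.2.1)) = g)).card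
      = cnt f g.1 g.2 := by
  have h2 : (2 : ZMod 2) = 0 := rfl
  rw [cnt]
  refine Finset.card_bij' (fun pr _ => pr.2.1)
    (fun y _ => ((y + g.1, f (y + g.1)), (y, f y))) ?_ ?_ ?_ ?_
  · -- forward membership
    intro pr hpr
    rw [Finset.mem_filter] at hpr
    obtain ⟨hmem, hcond⟩ := hpr
    rw [Finset.mem_product, mem_Rf, mem_Rf] at hmem
    obtain ⟨h1, h2'⟩ := hmem
    rw [neg_eq', neg_eq'', Prod.ext_iff] at hcond
    obtain ⟨hc1, hc2⟩ := hcond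
    simp only at hc1 hc2
    have hx : pr.1.1 = pr.2.1 + g.1 := by
      rw [solve_add hc1, add_comm]
    rw [Finset.mem_filter]
    refine ⟨Finset.mem_univ _, ?_⟩
    rw [h1, h2', hx] at hc2
    rw [Bl_add_left] at hc2
    linear_combination hc2 - (Bl pr.2.1 pr.2.1) * h2
  · -- backward membership
    intro y hy
    rw [Finset.mem_filter] at hy
    obtain ⟨-, hy⟩ := hy
    rw [Finset.mem_filter, Finset.mem_product, mem_Rf, mem_Rf]
    refine ⟨⟨rfl, rfl⟩, ?_⟩
    rw [neg_eq', neg_eq'', Prod.ext_iff]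
    constructor
    · show y + g.1 + y = g.1
      rw [add_comm y g.1, add_assoc, add_self', add_zero]
    · show f (y + g.1) + (f y + Bl y y) + Bl (y + g.1) y = g.2
      rw [Bl_add_left]
      linear_combination hy + (Bl y y) * h2
  · -- left inverse
    intro pr hpr
    rw [Finset.mem_filter] at hpr
    obtain ⟨hmem, hcond⟩ := hpr
    rw [Finset.mem_product, mem_Rf, mem_Rf] at hmem
    obtain ⟨h1, h2'⟩ := hmem
    rw [neg_eq', Prod.ext_iff] at hcond
    obtain ⟨hc1, -⟩ := hcond
    simp only at hc1
    have hx : pr.1.1 = pr.2.1 + g.1 := by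
      rw [solve_add hc1, add_comm]
    have e1 : pr.1 = (pr.2.1 + g.1, f (pr.2.1 + g.1)) := by
      rw [Prod.ext_iff]
      exact ⟨hx, by rw [h1, hx]⟩
    have e2 : pr.2 = (pr.2.1, f pr.2.1) := by
      rw [Prod.ext_iff]
      exact ⟨rfl, h2'⟩
    rw [Prod.ext_iff]
    exact ⟨e1.symm, e2.symm⟩
  · intro y _
    rfl

lemma cnt_zero_one (f : (Fin m → ZMod 2) → ZMod 2) : cnt f 0 1 = 0 := by
  rw [cnt, Finset.card_eq_zero, Finset.filter_eq_empty_iff]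
  intro y _
  rw [add_zero, Bl_zero_left, add_zero, add_self'']
  decide

lemma abs_bridge (z : ℂ) :
    ‖z‖ ^ 2 = (2 : ℝ) ^ m ↔ z * (starRingEnd ℂ) z = (2 : ℂ) ^ m := by
  rw [Complex.sq_norm, Complex.mul_conj]
  constructor
  · intro h
    rw [h]
    push_cast
    ring
  · intro h
    have : ((Complex.normSq z : ℝ) : ℂ) = (((2 : ℝ) ^ m : ℝ) : ℂ) := by
      rw [h]; push_cast; ring
    exact Complex.ofReal_inj.mp this

end RdsNB

open scoped Classical in
/-- For `f : F_2^m → F_2` and `R = {(x, f x)} ⊆ G`, where `G = F_2^m × F_2` carries the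
operation `(x,y) ∗ (x',y') = (x+x', y+y'+⟨x,x'⟩)`, the set `R` is a
`(2^m, 2, 2^m, 2^{m-1})` difference set relative to `N = {0} × F_2` if and only if `f` is
negabent: `|Σ_x (−1)^{⟨x,a⟩+f(x)} i^{w(x)}|² = 2^m` for every `a`. -/
theorem rds_iff_negabent (m : ℕ) (f : (Fin m → ZMod 2) → ZMod 2) :
    let B : (Fin m → ZMod 2) → (Fin m → ZMod 2) → ZMod 2 :=
      fun x y => ∑ i, x i * y i
    let star : (Fin m → ZMod 2) × ZMod 2 → (Fin m → ZMod 2) × ZMod 2 →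
        (Fin m → ZMod 2) × ZMod 2 :=
      fun p q => (p.1 + q.1, p.2 + q.2 + B p.1 q.1)
    let inv : (Fin m → ZMod 2) × ZMod 2 → (Fin m → ZMod 2) × ZMod 2 :=
      fun p => (-p.1, -p.2 + B p.1 p.1)
    let w : (Fin m → ZMod 2) → ℕ :=
      fun x => (Finset.univ.filter (fun i => x i ≠ 0)).card
    let R : Finset ((Fin m → ZMod 2) × ZMod 2) :=
      Finset.univ.image (fun x : Fin m → ZMod 2 => (x, f x))
    (R.card = 2 ^ m ∧
      (∀ g : (Fin m → ZMod 2) × ZMod 2, g.1 ≠ 0 →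
        ((R ×ˢ R).filter (fun pr => star pr.1 (inv pr.2) = g)).card = 2 ^ (m - 1)) ∧
      ((R ×ˢ R).filter
        (fun pr => star pr.1 (inv pr.2) = ((0 : Fin m → ZMod 2), (1 : ZMod 2)))).card
          = 0) ↔
    (∀ a : Fin m → ZMod 2,
      ‖∑ x : Fin m → ZMod 2,
        (-1 : ℂ) ^ ((B x a + f x).val) * Complex.I ^ (w x)‖ ^ 2 = 2 ^ m) := by
  intro B star inv w R
  have hbridge : ∀ g : (Fin m → ZMod 2) × ZMod 2,
      ((R ×ˢ R).filter (fun pr => star pr.1 (inv pr.2) = g)).card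
        = RdsNB.cnt f g.1 g.2 := fun g => RdsNB.card_pairs f g
  constructor
  · rintro ⟨-, h1, -⟩ a
    have hT : ∀ d : Fin m → ZMod 2, d ≠ 0 → RdsNB.T f d = 0 := by
      intro d hd
      refine (RdsNB.count_iff_T f d hd).mp ?_ 
      intro b
      have hh := h1 (d, b) hd
      rwa [hbridge (d, b)] at hh
    show ‖∑ x, RdsNB.χ (RdsNB.Bl x a + f x) * RdsNB.ee x‖ ^ 2 = (2 : ℝ) ^ m
    rw [RdsNB.abs_bridge, RdsNB.key f a]
    exact RdsNB.forward_engine f a hT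
  · intro hneg
    have H : ∀ a, ∑ d, RdsNB.χ (RdsNB.Bl d a) * RdsNB.ee d * RdsNB.T f d
        = (2 ^ m : ℂ) := by
      intro a
      rw [← RdsNB.key f a, ← RdsNB.abs_bridge]
      exact hneg a
    have hT : ∀ d : Fin m → ZMod 2, d ≠ 0 → RdsNB.T f d = 0 :=
      fun d hd => RdsNB.backward_engine f H hd
    refine ⟨?_, ?_, ?_⟩
    · show (Finset.univ.image fun x : Fin m → ZMod 2 => (x, f x)).card = 2 ^ m
      rw [Finset.card_image_of_injective _ (fun a b h => (Prod.ext_iff.mp h).1),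
        Finset.card_univ, RdsNB.card_V]
    · intro g hg
      rw [hbridge g]
      exact (RdsNB.count_iff_T f g.1 hg).mpr (hT g.1 hg) g.2
    · rw [hbridge ((0 : Fin m → ZMod 2), (1 : ZMod 2))]
      exact RdsNB.cnt_zero_one f
end
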